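/- arXiv:2009.09419 — 4 statements merged into one kernel-verified Lean document; each statement's English description precedes it below -/
import Mathlib

section
/- Let 0 < λ < 1, a < b, C ∈ ℝ, and let x : (a,b] → ℝ be continuous with lim_{t→a⁺} (t−a)^{1−λ} x(t) = C. Then the Riemann–Liouville fractional integral of order 1−λ of x satisfies lim_{t→a⁺} ({}_aI^{1−λ}_t x)(t) = C·Γ(λ). In particular, a function satisfying the weighted initial condition with value C satisfies the integral-type initial condition with value B = C·Γ(λ). -/
open MeasureTheory Set Filter Topology

/-- Riemann–Liouville fractional integral of order `β` with lower limit `a`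
(for `β = 0` it is the identity). -/
noncomputable def rlInt (a β : ℝ) (g : ℝ → ℝ) (t : ℝ) : ℝ :=
  if β = 0 then g t
  else (1 / Real.Gamma β) * ∫ s in a..t, (t - s) ^ (β - 1) * g s

/-- Hilfer fractional derivative of order `μ` and type `ν` with lower limit `a`. -/
noncomputable def hilferD (a μ ν : ℝ) (x : ℝ → ℝ) (t : ℝ) : ℝ :=
  rlInt a (ν * (1 - μ)) (deriv (rlInt a ((1 - ν) * (1 - μ)) x)) t

open intervalIntegral

lemma aux_integrable {lam T : ℝ} (h0 : 0 < lam) (h1 : lam < 1) (hT : 0 < T) :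
    IntervalIntegrable (fun y => y ^ (lam - 1) * (T - y) ^ (-lam)) volume 0 T := by
  have L : IntervalIntegrable (fun y => y ^ (lam - 1) * (T - y) ^ (-lam)) volume 0 (T / 2) := by
    apply IntervalIntegrable.mul_continuousOn
    · exact intervalIntegrable_rpow' (by linarith)
    · apply ContinuousOn.rpow_const ((continuous_const.sub continuous_id).continuousOn)
      intro y hy
      rw [uIcc_of_le (by linarith)] at hy
      left; simp only [Pi.sub_apply, id_eq]; intro h; nlinarith [hy.2]
  have R : IntervalIntegrable (fun y => y ^ (lam - 1) * (T - y) ^ (-lam)) volume (T / 2) T := by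
    have hg : IntervalIntegrable (fun y => (T - y) ^ (-lam)) volume (T / 2) T := by
      have h := (intervalIntegrable_rpow' (a := T / 2) (b := 0) (r := -lam) (by linarith)).comp_sub_left T
      have e : T - T / 2 = T / 2 := by ring
      rw [e] at h
      simpa using h
    apply hg.continuousOn_mul
    apply ContinuousOn.rpow_const continuousOn_id
    intro y hy
    rw [uIcc_of_le (by linarith)] at hy
    left; simp only [id_eq]; intro h; nlinarith [hy.1]
  exact L.trans R

lemma aux_value {lam T : ℝ} (h0 : 0 < lam) (h1 : lam < 1) (hT : 0 < T) :
    ∫ y in (0:ℝ)..T, y ^ (lam - 1) * (T - y) ^ (-lam)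
      = Real.Gamma lam * Real.Gamma (1 - lam) := by
  have hs : (0:ℝ) < ((lam : ℂ)).re := by simpa using h0
  have ht : (0:ℝ) < ((1 - (lam:ℝ) : ℝ) : ℂ).re := by simpa using by linarith
  have hscaled := Complex.betaIntegral_scaled (lam : ℂ) ((1 - lam : ℝ) : ℂ) hT
  have hGG := Complex.Gamma_mul_Gamma_eq_betaIntegral hs ht
  have hsum : (lam : ℂ) + ((1 - lam : ℝ) : ℂ) = 1 := by push_cast; ring
  rw [hsum, Complex.Gamma_one, one_mul] at hGG
  have hexp : (lam : ℂ) + ((1 - lam : ℝ) : ℂ) - 1 = 0 := by rw [hsum]; ring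
  rw [hexp, Complex.cpow_zero, one_mul] at hscaled
  have hcongr : ∫ y in (0:ℝ)..T, ((y:ℂ) ^ ((lam:ℂ) - 1) * ((T:ℂ) - y) ^ (((1 - lam:ℝ):ℂ) - 1))
      = ((∫ y in (0:ℝ)..T, y ^ (lam - 1) * (T - y) ^ (-lam) : ℝ) : ℂ) := by
    rw [← intervalIntegral.integral_ofReal]
    apply intervalIntegral.integral_congr
    intro y hy
    rw [uIcc_of_le hT.le] at hy
    have hy0 : (0:ℝ) ≤ y := hy.1
    have hTy : (0:ℝ) ≤ T - y := by linarith [hy.2]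
    simp only [Complex.ofReal_mul, Complex.ofReal_cpow hy0, Complex.ofReal_cpow hTy]
    push_cast
    ring_nf
  rw [hcongr] at hscaled
  have := hscaled.trans hGG.symm
  rw [Complex.Gamma_ofReal, Complex.Gamma_ofReal] at this
  exact_mod_cast this

/-- if `x : (a,b] → ℝ` is continuous and `(t−a)^(1−λ)·x(t) → C` as
`t → a⁺`, then the Riemann–Liouville integral of order `1−λ` of `x` tends to
`C·Γ(λ)` as `t → a⁺`. -/
theorem statement5 (lam a b C : ℝ) (hlam0 : 0 < lam) (hlam1 : lam < 1) (hab : a < b)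
    (x : ℝ → ℝ) (hx : ContinuousOn x (Set.Ioc a b))
    (hlim : Tendsto (fun t => (t - a) ^ (1 - lam) * x t) (𝓝[>] a) (𝓝 C)) :
    Tendsto (fun t => rlInt a (1 - lam) x t) (𝓝[>] a) (𝓝 (C * Real.Gamma lam)) := by
  have hΓ1 : 0 < Real.Gamma (1 - lam) := Real.Gamma_pos_of_pos (by linarith)
  have hΓ2 : 0 < Real.Gamma lam := Real.Gamma_pos_of_pos hlam0
  rw [Metric.tendsto_nhdsWithin_nhds] at hlim ⊢
  intro ε hε
  set ε' := ε / (Real.Gamma lam + 1) with hε'def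
  have hε' : 0 < ε' := div_pos hε (by linarith)
  obtain ⟨δ₁, hδ₁, hδ⟩ := hlim ε' hε'
  refine ⟨min δ₁ (b - a), lt_min hδ₁ (by linarith), ?_⟩
  intro t ht hdist
  have hta : a < t := ht
  have hdist' : t - a < min δ₁ (b - a) := by
    rwa [Real.dist_eq, abs_of_pos (by linarith : (0:ℝ) < t - a)] at hdist
  have hdd := lt_min_iff.mp hdist'
  have htb : t ≤ b := by linarith [hdd.2]
  have hT : (0:ℝ) < t - a := by linarith
  set f : ℝ → ℝ := fun s => (s - a) ^ (lam - 1) * (t - s) ^ (-lam) with hfdef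
  set w : ℝ → ℝ := fun s => (s - a) ^ (1 - lam) * x s with hwdef
  set K := Real.Gamma lam * Real.Gamma (1 - lam) with hKdef
  have efun : (fun s => (fun y => y ^ (lam - 1) * ((t - a) - y) ^ (-lam)) (s - a)) = f := by
    funext s
    have e : (t - a) - (s - a) = t - s := by ring
    simp only [e, hfdef]
  have hfint : IntervalIntegrable f volume a t := by
    have h := (aux_integrable hlam0 hlam1 hT).comp_sub_right a
    rw [zero_add] at h
    have e2 : t - a + a = t := by ring
    rw [e2] at h
    rwa [efun] at h
  have hval : ∫ s in a..t, f s = K := by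
    have h := intervalIntegral.integral_comp_sub_right
      (a := a) (b := t) (fun y => y ^ (lam - 1) * ((t - a) - y) ^ (-lam)) a
    rw [efun, sub_self] at h
    rw [h, aux_value hlam0 hlam1 hT]
  have hfI : IntegrableOn f (Ioc a t) := hfint.1
  have hfpos : ∀ s ∈ Ioc a t, 0 ≤ f s := by
    intro s hs
    exact mul_nonneg (Real.rpow_nonneg (by linarith [hs.1]) _)
      (Real.rpow_nonneg (by linarith [hs.2]) _)
  have hwbound : ∀ s ∈ Ioc a t, |w s - C| ≤ ε' := by
    intro s hs
    have h1 : s ∈ Ioi a := hs.1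
    have h2 : dist s a < δ₁ := by
      rw [Real.dist_eq, abs_of_pos (by linarith [hs.1] : (0:ℝ) < s - a)]
      linarith [hs.2, hdd.1]
    have := hδ h1 h2
    rw [Real.dist_eq] at this
    exact le_of_lt this
  -- measurability of w on Ioc a t
  have hxm : AEStronglyMeasurable w (volume.restrict (Ioc a t)) := by
    have hcont : ContinuousOn w (Ioc a b) := by
      apply ContinuousOn.mul
      · apply ContinuousOn.rpow_const (continuousOn_id.sub continuousOn_const)
        intro s hs
        left
        exact ne_of_gt (sub_pos.mpr hs.1)
      · exact hx
    exact (hcont.aestronglyMeasurable measurableSet_Ioc).mono_measure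
      (Measure.restrict_mono (Ioc_subset_Ioc le_rfl htb) le_rfl)
  set g : ℝ → ℝ := fun s => f s * (w s - C) with hgdef
  have hgm : AEStronglyMeasurable g (volume.restrict (Ioc a t)) :=
    hfI.aestronglyMeasurable.mul (hxm.sub aestronglyMeasurable_const)
  have hεfI : IntegrableOn (fun s => ε' * f s) (Ioc a t) := hfI.const_mul ε'
  have hbound : ∀ᵐ s ∂(volume.restrict (Ioc a t)), ‖g s‖ ≤ ε' * f s := by
    rw [ae_restrict_iff' measurableSet_Ioc]
    apply ae_of_all
    intro s hs
    have h0f := hfpos s hs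
    rw [hgdef]
    simp only [Real.norm_eq_abs, abs_mul, abs_of_nonneg h0f]
    rw [mul_comm ε' (f s)]
    exact mul_le_mul_of_nonneg_left (hwbound s hs) h0f
  have hgI : IntegrableOn g (Ioc a t) := by
    apply MeasureTheory.Integrable.mono hεfI hgm
    filter_upwards [hbound] with s hs
    refine hs.trans ?_
    exact le_abs_self _
  have hCI : IntegrableOn (fun s => f s * C) (Ioc a t) := hfI.mul_const C
  -- value of rlInt
  have hIocval : ∫ s in Ioc a t, f s = K := by
    rw [← intervalIntegral.integral_of_le hta.le]; exact hval
  have hsplit : ∫ s in Ioc a t, f s * w s = (∫ s in Ioc a t, g s) + K * C := by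
    have e : (fun s => f s * w s) = fun s => g s + f s * C := by
      funext s; rw [hgdef]; ring
    rw [e, integral_add hgI hCI, MeasureTheory.integral_mul_const, hIocval]
  have hrl : rlInt a (1 - lam) x t
      = (1 / Real.Gamma (1 - lam)) * ((∫ s in Ioc a t, g s) + K * C) := by
    rw [rlInt, if_neg (by intro h; linarith : ¬(1 - lam = 0))]
    rw [← hsplit]
    congr 1
    rw [intervalIntegral.integral_of_le hta.le]
    apply setIntegral_congr_fun measurableSet_Ioc
    intro s hs
    have hsa : (0:ℝ) < s - a := by linarith [hs.1]
    have e1 : (1 - lam) - 1 = -lam := by ring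
    show (t - s) ^ ((1 - lam) - 1) * x s = f s * w s
    rw [e1]
    have : f s * w s = ((s - a) ^ (lam - 1) * (s - a) ^ (1 - lam)) * ((t - s) ^ (-lam) * x s) := by
      rw [hfdef, hwdef]; ring
    rw [this, ← Real.rpow_add hsa, (by ring : lam - 1 + (1 - lam) = (0:ℝ)), Real.rpow_zero, one_mul]
  -- the estimate
  have hnorm : ‖∫ s in Ioc a t, g s‖ ≤ ε' * K := by
    have h := norm_integral_le_of_norm_le hεfI hbound
    rwa [MeasureTheory.integral_const_mul, hIocval, Real.norm_eq_abs] at h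
  rw [Real.dist_eq, hrl]
  have hC2 : (1 / Real.Gamma (1 - lam)) * (K * C) = C * Real.Gamma lam := by
    rw [hKdef]; field_simp
  have e3 : (1 / Real.Gamma (1 - lam)) * ((∫ s in Ioc a t, g s) + K * C) - C * Real.Gamma lam
      = (1 / Real.Gamma (1 - lam)) * (∫ s in Ioc a t, g s) := by
    rw [mul_add, hC2]; ring
  rw [e3, abs_mul, abs_of_pos (by positivity : (0:ℝ) < 1 / Real.Gamma (1 - lam))]
  calc 1 / Real.Gamma (1 - lam) * |∫ s in Ioc a t, g s|
      ≤ 1 / Real.Gamma (1 - lam) * (ε' * K) := by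
        apply mul_le_mul_of_nonneg_left hnorm (by positivity)
    _ = ε' * Real.Gamma lam := by rw [hKdef]; field_simp
    _ < ε := by
        rw [hε'def]
        rw [div_mul_eq_mul_div, div_lt_iff₀ (by linarith)]
        nlinarith
end

section
/- Let 0 < μ < 1, 0 ≤ ν ≤ 1, λ = μ + ν − μν, a < b, C ∈ ℝ, L > 0, and let G : (a,b] × ℝ → ℝ satisfy: (i) for every function y : (a,b] → ℝ for which t ↦ (t−a)^{1−λ} y(t) extends continuously to [a,b], the function t ↦ (t−a)^{1−λ} G(t, y(t)) extends continuously to [a,b]; (ii) |G(t,u) − G(t,v)| ≤ L|u−v| for all t ∈ (a,b] and u, v ∈ ℝ. Then there exists exactly one function x : (a,b] → ℝ such that t ↦ (t−a)^{1−λ} x(t) extends continuously to [a,b] and x(t) = C (t−a)^{λ−1} + (1/Γ(μ)) ∫_a^t (t−s)^{μ−1} G(s, x(s)) ds for all t ∈ (a,b]; equivalently, the weighted Cauchy problem {}_aD^{μ,ν}_t x = G(t,x), lim_{t→a⁺}(t−a)^{1−λ} x(t) = C has a unique solution in the weighted space. -/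
open MeasureTheory Set Filter Topology

/-- `f` defined on `(a,b]` extends continuously to `[a,b]`. -/
def ExtendsCont (f : ℝ → ℝ) (a b : ℝ) : Prop :=
  ∃ g : ℝ → ℝ, ContinuousOn g (Set.Icc a b) ∧ ∀ t ∈ Set.Ioc a b, g t = f t

/-- Beta-type integrability. -/
lemma st7_kint {p q : ℝ} (hp : -1 < p) (hq : -1 < q) :
    IntegrableOn (fun u : ℝ => (1 - u) ^ p * u ^ q) (Ioo (0:ℝ) 1) volume := by
  have hmeas : ∀ c d : ℝ, c ≤ d → Ioo c d ⊆ Ioo (0:ℝ) 1 →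
      AEStronglyMeasurable (fun u : ℝ => (1 - u) ^ p * u ^ q) (volume.restrict (Ioo c d)) := by
    intro c d _ hsub
    refine (ContinuousOn.mul ?_ ?_).aestronglyMeasurable measurableSet_Ioo
    · refine ContinuousOn.rpow_const (by fun_prop) ?_
      intro x hx; left
      have := hsub hx
      have : x < 1 := this.2
      intro h; nlinarith [sub_eq_zero.mp h]
    · refine ContinuousOn.rpow_const (by fun_prop) ?_
      intro x hx; left; exact ne_of_gt (hsub hx).1
  have h2 : Ioo (0:ℝ) 1 = Ioo 0 (1/2) ∪ Ioo (1/2) 1 ∪ {(1/2 : ℝ)} := by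
    ext x; simp only [mem_Ioo, mem_union, mem_singleton_iff]; constructor
    · rintro ⟨h0, h1⟩
      rcases lt_trichotomy x (1/2) with h | h | h
      · exact Or.inl (Or.inl ⟨h0, h⟩)
      · exact Or.inr h
      · exact Or.inl (Or.inr ⟨h, h1⟩)
    · rintro ((⟨h0, h1⟩ | ⟨h0, h1⟩) | rfl) <;> constructor <;> norm_num <;> linarith
  rw [h2]
  refine (IntegrableOn.union ?_ ?_).union ((integrableOn_singleton_iff (hfx := by finiteness)).mpr ?_)
  · -- on Ioo 0 (1/2) : bound by c * u^q
    have hint : IntegrableOn (fun u : ℝ => u ^ q) (Ioo (0:ℝ) (1/2)) volume := by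
      have := intervalIntegral.intervalIntegrable_rpow' (a := (0:ℝ)) (b := 1/2) hq
      rw [intervalIntegrable_iff_integrableOn_Ioo_of_le (by norm_num)] at this
      exact this
    set c : ℝ := max 1 ((1/2 : ℝ) ^ p) with hc
    refine Integrable.mono' (hint.const_mul c) (hmeas 0 (1/2) (by norm_num) (by
      intro x hx; exact ⟨hx.1, by nlinarith [hx.2]⟩)) ?_
    filter_upwards [ae_restrict_mem measurableSet_Ioo] with x hx
    have hx0 : 0 < x := hx.1
    have hx2 : x < 1/2 := hx.2
    have h1x : (1/2 : ℝ) ≤ 1 - x := by linarith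
    have hb : (1 - x) ^ p ≤ c := by
      rcases le_or_gt 0 p with hp0 | hp0
      · calc (1 - x) ^ p ≤ 1 ^ p := Real.rpow_le_rpow (by linarith) (by linarith) hp0
          _ = 1 := Real.one_rpow p
          _ ≤ c := le_max_left _ _
      · calc (1 - x) ^ p ≤ (1/2 : ℝ) ^ p := Real.rpow_le_rpow_of_nonpos (by norm_num) h1x hp0.le
          _ ≤ c := le_max_right _ _
    have hbnn : 0 ≤ (1 - x) ^ p := Real.rpow_nonneg (by linarith) p
    have hqnn : 0 ≤ x ^ q := Real.rpow_nonneg hx0.le q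
    rw [Real.norm_eq_abs, abs_of_nonneg (mul_nonneg hbnn hqnn)]
    exact mul_le_mul_of_nonneg_right hb hqnn |>.trans_eq rfl
  · -- on Ioo (1/2) 1 : bound by c * (1-u)^p
    have hint : IntegrableOn (fun u : ℝ => (1 - u) ^ p) (Ioo (1/2 : ℝ) 1) volume := by
      have h0 := intervalIntegral.intervalIntegrable_rpow' (a := (0:ℝ)) (b := 1/2) hp
      have := h0.comp_sub_left 1
      simp only [intervalIntegrable_iff] at this
      rw [show (1:ℝ) - 0 = 1 by ring, show (1:ℝ) - 1/2 = 1/2 by ring, uIoc_comm] at this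
      rw [uIoc_of_le (by norm_num : (1/2:ℝ) ≤ 1)] at this
      exact this.mono_set Ioo_subset_Ioc_self
    have hint' := hint
    set c : ℝ := max 1 ((1/2 : ℝ) ^ q) with hc
    refine Integrable.mono' (hint'.const_mul c) (hmeas (1/2) 1 (by norm_num) (by
      intro x hx; exact ⟨by nlinarith [hx.1], hx.2⟩)) ?_
    filter_upwards [ae_restrict_mem measurableSet_Ioo] with x hx
    have hx0 : (1/2:ℝ) < x := hx.1
    have hx1 : x < 1 := hx.2
    have hb : x ^ q ≤ c := by
      rcases le_or_gt 0 q with hq0 | hq0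
      · calc x ^ q ≤ 1 ^ q := Real.rpow_le_rpow (by linarith) hx1.le hq0
          _ = 1 := Real.one_rpow q
          _ ≤ c := le_max_left _ _
      · calc x ^ q ≤ (1/2 : ℝ) ^ q := Real.rpow_le_rpow_of_nonpos (by norm_num) hx0.le hq0.le
          _ ≤ c := le_max_right _ _
    have hpnn : 0 ≤ (1 - x) ^ p := Real.rpow_nonneg (by linarith) p
    have hqnn : 0 ≤ x ^ q := Real.rpow_nonneg (by linarith) q
    rw [Real.norm_eq_abs, abs_of_nonneg (mul_nonneg hpnn hqnn), mul_comm c _]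
    exact mul_le_mul_of_nonneg_left hb hpnn
  · exact Or.inr (by simp)

lemma st7_pow_exp {x m : ℝ} (hx : 0 ≤ x) (hm0 : 0 ≤ m) (hm1 : m ≤ 1) :
    x ^ m * Real.exp (-x) ≤ 1 := by
  rcases le_or_gt x 1 with h | h
  · have h1 : x ^ m ≤ 1 := Real.rpow_le_one hx h hm0
    have h2 : Real.exp (-x) ≤ 1 := Real.exp_le_one_iff.mpr (by linarith)
    calc x ^ m * Real.exp (-x) ≤ 1 * 1 :=
      mul_le_mul h1 h2 (Real.exp_pos _).le (by linarith)
    _ = 1 := by ring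
  · have h1 : x ^ m ≤ x := by
      calc x ^ m ≤ x ^ (1:ℝ) := Real.rpow_le_rpow_of_exponent_le h.le hm1
      _ = x := Real.rpow_one x
    have h2 : x * Real.exp (-x) ≤ 1 := by
      rw [Real.exp_neg]
      have h3 := Real.add_one_le_exp x
      have h4 := Real.exp_pos x
      have h5 : x / Real.exp x ≤ 1 := (div_le_one h4).mpr (by linarith)
      rw [div_eq_mul_inv] at h5; exact h5
    calc x ^ m * Real.exp (-x) ≤ x * Real.exp (-x) :=
      mul_le_mul_of_nonneg_right h1 (Real.exp_pos _).le
    _ ≤ 1 := h2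

lemma st7_subst {μ lam a τ : ℝ} (hτ : a < τ) (ψ : ℝ → ℝ) :
    ∫ s in a..τ, (τ - s) ^ (μ - 1) * ((s - a) ^ (lam - 1) * ψ s) =
      (τ - a) ^ (μ + lam - 1) *
        ∫ u in (0:ℝ)..1, (1 - u) ^ (μ - 1) * u ^ (lam - 1) * ψ (a + u * (τ - a)) := by
  set r := τ - a with hrdef
  have hr : 0 < r := sub_pos.mpr hτ
  have h1 := intervalIntegral.integral_comp_mul_add
    (a := (0:ℝ)) (b := 1) (c := r)
    (f := fun s => (τ - s) ^ (μ - 1) * ((s - a) ^ (lam - 1) * ψ s)) hr.ne' a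
  rw [mul_zero, zero_add, mul_one] at h1
  have hra : r + a = τ := by rw [hrdef]; ring
  rw [hra] at h1
  have h2 : ∀ u ∈ uIcc (0:ℝ) 1,
      (τ - (r * u + a)) ^ (μ - 1) * (((r * u + a) - a) ^ (lam - 1) * ψ (r * u + a)) =
      r ^ (μ + lam - 2) * ((1 - u) ^ (μ - 1) * u ^ (lam - 1) * ψ (a + u * r)) := by
    intro u hu
    rw [uIcc_of_le (by norm_num : (0:ℝ) ≤ 1)] at hu
    have hu0 : 0 ≤ u := hu.1
    have hu1 : u ≤ 1 := hu.2
    have e1 : τ - (r * u + a) = r * (1 - u) := by rw [hrdef]; ring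
    have e2 : (r * u + a) - a = r * u := by ring
    have e3 : r * u + a = a + u * r := by ring
    rw [e1, e2, e3, Real.mul_rpow hr.le (by linarith), Real.mul_rpow hr.le hu0]
    rw [show μ + lam - 2 = (μ - 1) + (lam - 1) by ring, Real.rpow_add hr]
    ring
  have h3 : (∫ u in (0:ℝ)..1,
      (τ - (r * u + a)) ^ (μ - 1) * (((r * u + a) - a) ^ (lam - 1) * ψ (r * u + a))) =
      ∫ u in (0:ℝ)..1, r ^ (μ + lam - 2) * ((1 - u) ^ (μ - 1) * u ^ (lam - 1) * ψ (a + u * r)) :=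
    intervalIntegral.integral_congr h2
  rw [h3, intervalIntegral.integral_const_mul] at h1
  have h4 : (∫ s in a..τ, (τ - s) ^ (μ - 1) * ((s - a) ^ (lam - 1) * ψ s)) =
      r * (r ^ (μ + lam - 2) * ∫ u in (0:ℝ)..1,
        (1 - u) ^ (μ - 1) * u ^ (lam - 1) * ψ (a + u * r)) := by
    rw [h1, smul_eq_mul, ← mul_assoc, mul_inv_cancel₀ hr.ne', one_mul]
  rw [h4, ← mul_assoc]
  congr 1
  rw [show (r : ℝ) * r ^ (μ + lam - 2) = r ^ (1:ℝ) * r ^ (μ + lam - 2) by rw [Real.rpow_one],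
    ← Real.rpow_add hr]
  rw [show (1:ℝ) + (μ + lam - 2) = μ + lam - 1 by ring]

lemma st7_meas {p q : ℝ} (g : ℝ → ℝ) (hg : Continuous g) {S : Set ℝ} (hS : MeasurableSet S)
    (hsub : S ⊆ Ioo (0:ℝ) 1) :
    AEStronglyMeasurable (fun u : ℝ => (1 - u) ^ p * u ^ q * g u) (volume.restrict S) := by
  refine ContinuousOn.aestronglyMeasurable ?_ hS
  refine ContinuousOn.mul (ContinuousOn.mul ?_ ?_) hg.continuousOn
  · refine ContinuousOn.rpow_const (by fun_prop) ?_
    intro x hx; left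
    have h := hsub hx
    intro hcon; nlinarith [sub_eq_zero.mp hcon, h.2]
  · refine ContinuousOn.rpow_const (by fun_prop) ?_
    intro x hx; left; exact ne_of_gt (hsub hx).1

lemma st7_rpow_int {q c : ℝ} (hq : -1 < q) (hc : 0 ≤ c) :
    IntegrableOn (fun u : ℝ => u ^ q) (Ioo (0:ℝ) c) volume := by
  have := intervalIntegral.intervalIntegrable_rpow' (a := (0:ℝ)) (b := c) hq
  rw [intervalIntegrable_iff_integrableOn_Ioo_of_le hc] at this
  exact this

lemma st7_one_sub_int {p c : ℝ} (hp : -1 < p) (hc : c ≤ 1) :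
    IntegrableOn (fun u : ℝ => (1 - u) ^ p) (Ioo c 1) volume := by
  have h0 := intervalIntegral.intervalIntegrable_rpow' (a := (0:ℝ)) (b := 1 - c) hp
  have h1 := h0.comp_sub_left 1
  rw [intervalIntegrable_iff] at h1
  rw [show (1:ℝ) - 0 = 1 by ring, show (1:ℝ) - (1 - c) = c by ring, uIoc_comm,
    uIoc_of_le hc] at h1
  exact h1.mono_set Ioo_subset_Ioc_self

lemma st7_val_q {q : ℝ} (hq : -1 < q) (hq' : q + 1 ≠ 0) :
    ∫ u in Ioo (0:ℝ) 1, u ^ q = 1 / (q + 1) := by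
  rw [← integral_Ioc_eq_integral_Ioo, ← intervalIntegral.integral_of_le (by norm_num : (0:ℝ) ≤ 1)]
  rw [integral_rpow (Or.inl hq)]
  rw [Real.one_rpow, Real.zero_rpow hq']
  ring

lemma st7_val_p {p c : ℝ} (hp : -1 < p) (hc : c ≤ 1) (hp' : p + 1 ≠ 0) :
    ∫ u in Ioo c 1, (1 - u) ^ p = (1 - c) ^ (p + 1) / (p + 1) := by
  rw [← integral_Ioc_eq_integral_Ioo, ← intervalIntegral.integral_of_le hc]
  rw [intervalIntegral.integral_comp_sub_left (fun v => v ^ p) 1]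
  rw [show (1:ℝ) - 1 = 0 by ring]
  rw [integral_rpow (Or.inl hp)]
  rw [Real.zero_rpow hp']
  ring


lemma st7_small {μ lam r0 ε : ℝ} (hμ0 : 0 < μ) (hμ1 : μ < 1) (hlam0 : 0 < lam)
    (hlam1 : lam ≤ 1) (hr0 : 0 < r0) (hε : 0 < ε) :
    ∃ K : ℝ, 0 ≤ K ∧ ∀ r ∈ Icc (0:ℝ) r0,
      r ^ μ * ∫ u in Ioo (0:ℝ) 1,
        (1 - u) ^ (μ - 1) * u ^ (lam - 1) * Real.exp (-(K * r * (1 - u))) ≤ ε := by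
  have hp : -1 < μ - 1 := by linarith
  have hq : -1 < lam - 1 := by linarith
  have hr0μ : (0:ℝ) < r0 ^ μ := Real.rpow_pos_of_pos hr0 μ
  have hrpow_id : ∀ X : ℝ, 0 < X → (X ^ (1/μ)) ^ μ = X := by
    intro X hX
    rw [← Real.rpow_mul hX.le, one_div, inv_mul_cancel₀ hμ0.ne', Real.rpow_one]
  obtain ⟨δ, hδ0, hδhalf, hδX⟩ :
      ∃ δ : ℝ, 0 < δ ∧ δ ≤ 1/2 ∧ δ ^ μ ≤ ε * μ / (4 * r0 ^ μ) := by
    have hXpos : (0:ℝ) < ε * μ / (4 * r0 ^ μ) := by positivity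
    refine ⟨min (1/2) ((ε * μ / (4 * r0 ^ μ)) ^ (1/μ)),
      lt_min (by norm_num) (Real.rpow_pos_of_pos hXpos _), min_le_left _ _, ?_⟩
    calc (min (1/2) ((ε * μ / (4 * r0 ^ μ)) ^ (1/μ))) ^ μ
        ≤ ((ε * μ / (4 * r0 ^ μ)) ^ (1/μ)) ^ μ :=
          Real.rpow_le_rpow (le_min (by norm_num) (Real.rpow_pos_of_pos hXpos _).le)
            (min_le_right _ _) hμ0.le
      _ = ε * μ / (4 * r0 ^ μ) := hrpow_id _ hXpos
  obtain ⟨K, hK1, hKY⟩ : ∃ K : ℝ, 1 ≤ K ∧ 2 / (lam * ε * δ) ≤ K ^ μ := by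
    have hYpos : (0:ℝ) < 2 / (lam * ε * δ) := by positivity
    refine ⟨max 1 ((2 / (lam * ε * δ)) ^ (1/μ)), le_max_left _ _, ?_⟩
    calc 2 / (lam * ε * δ) = ((2 / (lam * ε * δ)) ^ (1/μ)) ^ μ := (hrpow_id _ hYpos).symm
      _ ≤ (max 1 ((2 / (lam * ε * δ)) ^ (1/μ))) ^ μ :=
          Real.rpow_le_rpow (Real.rpow_nonneg hYpos.le _) (le_max_right _ _) hμ0.le
  have hK0 : (0:ℝ) ≤ K := by linarith
  refine ⟨K, hK0, ?_⟩
  rintro r ⟨hr0', hrr0⟩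
  rcases eq_or_lt_of_le hr0' with hr | hr
  · rw [← hr, Real.zero_rpow hμ0.ne', zero_mul]; exact hε.le
  -- r > 0 case
  have hKr : 0 ≤ K * r := mul_nonneg hK0 hr.le
  -- integrand and its properties
  set f : ℝ → ℝ := fun u => (1 - u) ^ (μ - 1) * u ^ (lam - 1) * Real.exp (-(K * r * (1 - u)))
    with hf
  have hf_nonneg : ∀ u ∈ Ioo (0:ℝ) 1, 0 ≤ f u := by
    intro u hu
    exact mul_nonneg (mul_nonneg (Real.rpow_nonneg (by linarith [hu.2]) _)
      (Real.rpow_nonneg hu.1.le _)) (Real.exp_pos _).le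
  have hf_le_k : ∀ u ∈ Ioo (0:ℝ) 1, f u ≤ (1 - u) ^ (μ - 1) * u ^ (lam - 1) := by
    intro u hu
    have h1 : Real.exp (-(K * r * (1 - u))) ≤ 1 :=
      Real.exp_le_one_iff.mpr (by nlinarith [hu.2])
    have h2 : 0 ≤ (1 - u) ^ (μ - 1) * u ^ (lam - 1) :=
      mul_nonneg (Real.rpow_nonneg (by linarith [hu.2]) _) (Real.rpow_nonneg hu.1.le _)
    show (1 - u) ^ (μ - 1) * u ^ (lam - 1) * Real.exp (-(K * r * (1 - u))) ≤
      (1 - u) ^ (μ - 1) * u ^ (lam - 1)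
    nlinarith [Real.exp_pos (-(K * r * (1 - u)))]
  have hf_int : IntegrableOn f (Ioo (0:ℝ) 1) volume := by
    refine Integrable.mono' (st7_kint hp hq) (st7_meas _ (by fun_prop) measurableSet_Ioo
      (fun x h => h)) ?_
    filter_upwards [ae_restrict_mem measurableSet_Ioo] with u hu
    rw [Real.norm_eq_abs, abs_of_nonneg (hf_nonneg u hu)]
    exact hf_le_k u hu
  have hsub1 : Ioo (0:ℝ) (1 - δ) ⊆ Ioo (0:ℝ) 1 := Ioo_subset_Ioo le_rfl (by linarith)
  have hsub2 : Ico (1 - δ) 1 ⊆ Ioo (0:ℝ) 1 := by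
    intro x hx; exact ⟨by linarith [hx.1, hδhalf], hx.2⟩
  have hsplit : ∫ u in Ioo (0:ℝ) 1, f u =
      (∫ u in Ioo (0:ℝ) (1 - δ), f u) + ∫ u in Ico (1 - δ) 1, f u := by
    rw [← setIntegral_union (by
        rw [Set.disjoint_left]; rintro x ⟨_, hx2⟩ ⟨hx3, _⟩; linarith)
      measurableSet_Ico (hf_int.mono_set hsub1) (hf_int.mono_set hsub2)]
    rw [Ioo_union_Ico_eq_Ioo (by linarith : (0:ℝ) < 1 - δ) (by linarith : 1 - δ ≤ 1)]
  -- piece 1 bound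
  set c1 : ℝ := δ ^ (μ - 1) * Real.exp (-(K * r * δ)) with hc1
  have hc1nn : 0 ≤ c1 := mul_nonneg (Real.rpow_nonneg hδ0.le _) (Real.exp_pos _).le
  have hpiece1 : (∫ u in Ioo (0:ℝ) (1 - δ), f u) ≤ c1 * (1 / lam) := by
    have hb_int : IntegrableOn (fun u : ℝ => c1 * u ^ (lam - 1)) (Ioo (0:ℝ) (1 - δ)) volume :=
      (st7_rpow_int hq (by linarith)).const_mul c1
    have hmono : (∫ u in Ioo (0:ℝ) (1 - δ), f u) ≤
        ∫ u in Ioo (0:ℝ) (1 - δ), c1 * u ^ (lam - 1) := by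
      refine setIntegral_mono_on (hf_int.mono_set hsub1) hb_int measurableSet_Ioo ?_
      intro u hu
      show (1 - u) ^ (μ - 1) * u ^ (lam - 1) * Real.exp (-(K * r * (1 - u))) ≤
        c1 * u ^ (lam - 1)
      have hu0 : 0 < u := hu.1
      have hu1 : u < 1 - δ := hu.2
      have hd1 : δ ≤ 1 - u := by linarith
      have h1 : (1 - u) ^ (μ - 1) ≤ δ ^ (μ - 1) :=
        Real.rpow_le_rpow_of_nonpos hδ0 hd1 (by linarith)
      have h2 : Real.exp (-(K * r * (1 - u))) ≤ Real.exp (-(K * r * δ)) := by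
        apply Real.exp_le_exp.mpr
        have := mul_le_mul_of_nonneg_left hd1 hKr
        linarith
      have h3 : 0 ≤ u ^ (lam - 1) := Real.rpow_nonneg hu0.le _
      have h4 : 0 ≤ (1 - u) ^ (μ - 1) := Real.rpow_nonneg (by linarith) _
      calc (1 - u) ^ (μ - 1) * u ^ (lam - 1) * Real.exp (-(K * r * (1 - u)))
          ≤ δ ^ (μ - 1) * u ^ (lam - 1) * Real.exp (-(K * r * δ)) := by
            apply mul_le_mul (mul_le_mul_of_nonneg_right h1 h3) h2 (Real.exp_pos _).le
            positivity
        _ = c1 * u ^ (lam - 1) := by rw [hc1]; ring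
    refine hmono.trans ?_
    rw [integral_const_mul]
    apply mul_le_mul_of_nonneg_left ?_ hc1nn
    have h5 : (∫ u in Ioo (0:ℝ) (1 - δ), u ^ (lam - 1)) ≤ ∫ u in Ioo (0:ℝ) 1, u ^ (lam - 1) := by
      refine setIntegral_mono_set (st7_rpow_int hq zero_le_one) ?_ (ae_of_all _ hsub1)
      filter_upwards [ae_restrict_mem measurableSet_Ioo] with u hu
      exact Real.rpow_nonneg hu.1.le _
    rw [st7_val_q hq (by intro h; apply hlam0.ne'; linarith)] at h5
    rw [show lam - 1 + 1 = lam by ring] at h5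
    exact h5
  -- piece 2 bound
  have hpiece2 : (∫ u in Ico (1 - δ) 1, f u) ≤ 2 * (δ ^ μ / μ) := by
    have hb_int : IntegrableOn (fun u : ℝ => (1 - u) ^ (μ - 1) * 2) (Ioo (1 - δ) 1) volume :=
      (st7_one_sub_int hp (by linarith)).mul_const 2
    have heq : (∫ u in Ico (1 - δ) 1, f u) = ∫ u in Ioo (1 - δ) 1, f u :=
      integral_Ico_eq_integral_Ioo
    rw [heq]
    have hmono : (∫ u in Ioo (1 - δ) 1, f u) ≤
        ∫ u in Ioo (1 - δ) 1, (1 - u) ^ (μ - 1) * 2 := by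
      refine setIntegral_mono_on (hf_int.mono_set (fun x hx =>
        hsub2 (Ioo_subset_Ico_self hx))) hb_int measurableSet_Ioo ?_
      intro u hu
      show (1 - u) ^ (μ - 1) * u ^ (lam - 1) * Real.exp (-(K * r * (1 - u))) ≤
        (1 - u) ^ (μ - 1) * 2
      have hu0 : 1 - δ < u := hu.1
      have hu1 : u < 1 := hu.2
      have hupos : (0:ℝ) < u := by linarith [hδhalf]
      have h1 : u ^ (lam - 1) ≤ 2 := by
        calc u ^ (lam - 1) ≤ ((1:ℝ)/2) ^ (lam - 1) := by
              apply Real.rpow_le_rpow_of_nonpos (by norm_num) (by linarith [hδhalf])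
                (by linarith)
          _ = 2 ^ (1 - lam) := by
              rw [show (1:ℝ)/2 = 2⁻¹ by norm_num, ← Real.rpow_neg_one (2:ℝ),
                ← Real.rpow_mul (by norm_num : (0:ℝ) ≤ 2)]
              norm_num
          _ ≤ 2 ^ (1:ℝ) := Real.rpow_le_rpow_of_exponent_le (by norm_num) (by linarith)
          _ = 2 := Real.rpow_one 2
      have h2 : Real.exp (-(K * r * (1 - u))) ≤ 1 :=
        Real.exp_le_one_iff.mpr (by nlinarith)
      have h3 : 0 ≤ (1 - u) ^ (μ - 1) := Real.rpow_nonneg (by linarith) _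
      have h4 : 0 ≤ u ^ (lam - 1) := Real.rpow_nonneg hupos.le _
      calc (1 - u) ^ (μ - 1) * u ^ (lam - 1) * Real.exp (-(K * r * (1 - u)))
          ≤ (1 - u) ^ (μ - 1) * u ^ (lam - 1) * 1 :=
            mul_le_mul_of_nonneg_left h2 (by positivity)
        _ = (1 - u) ^ (μ - 1) * u ^ (lam - 1) := by ring
        _ ≤ (1 - u) ^ (μ - 1) * 2 := mul_le_mul_of_nonneg_left h1 h3
    refine hmono.trans ?_
    have h6 : (∫ u in Ioo (1 - δ) 1, (1 - u) ^ (μ - 1) * 2) =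
        2 * ∫ u in Ioo (1 - δ) 1, (1 - u) ^ (μ - 1) := by
      rw [← integral_const_mul]
      congr 1; ext u; ring
    rw [h6, st7_val_p hp (by linarith) (by intro h; apply hμ0.ne'; linarith)]
    rw [show (1:ℝ) - (1 - δ) = δ by ring, show μ - 1 + 1 = μ by ring]
  -- combine
  have hJ : (∫ u in Ioo (0:ℝ) 1, f u) ≤ c1 * (1 / lam) + 2 * (δ ^ μ / μ) := by
    rw [hsplit]; exact add_le_add hpiece1 hpiece2
  have hrμ : 0 < r ^ μ := Real.rpow_pos_of_pos hr μ
  have hterm2 : r ^ μ * (2 * (δ ^ μ / μ)) ≤ ε / 2 := by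
    have h1 : r ^ μ ≤ r0 ^ μ := Real.rpow_le_rpow hr.le hrr0 hμ0.le
    have h2 : 0 < δ ^ μ := Real.rpow_pos_of_pos hδ0 μ
    have h3 : δ ^ μ ≤ ε * μ / (4 * r0 ^ μ) := hδX
    have h2' : 0 < μ := hμ0
    calc r ^ μ * (2 * (δ ^ μ / μ)) ≤ r0 ^ μ * (2 * ((ε * μ / (4 * r0 ^ μ)) / μ)) := by
          gcongr
      _ = ε / 2 := by field_simp; ring
  have hterm1 : r ^ μ * (c1 * (1 / lam)) ≤ ε / 2 := by
    obtain ⟨P, hPdef, hPpos⟩ : ∃ P, P = r ^ μ ∧ 0 < P := ⟨_, rfl, hrμ⟩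
    obtain ⟨D, hDdef, hDpos⟩ : ∃ D, D = δ ^ μ ∧ 0 < D := ⟨_, rfl, Real.rpow_pos_of_pos hδ0 μ⟩
    obtain ⟨KK, hKKdef, hKKpos⟩ : ∃ KK, KK = K ^ μ ∧ 0 < KK :=
      ⟨_, rfl, Real.rpow_pos_of_pos (by linarith) μ⟩
    obtain ⟨E, hEdef, hEpos⟩ : ∃ E, E = Real.exp (-(K * r * δ)) ∧ 0 < E :=
      ⟨_, rfl, Real.exp_pos _⟩
    have hDm : δ ^ (μ - 1) = D / δ := by
      rw [hDdef, Real.rpow_sub hδ0, Real.rpow_one]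
    have hA : KK * P * D * E ≤ 1 := by
      have h0 : 0 ≤ K * r * δ := by positivity
      have h5 := st7_pow_exp h0 hμ0.le hμ1.le
      rw [Real.mul_rpow (by positivity) hδ0.le, Real.mul_rpow hK0 hr.le] at h5
      rw [hKKdef, hPdef, hDdef, hEdef]
      exact h5
    have hkey : P * D * E ≤ lam * ε * δ / 2 := by
      have h6 : 2 ≤ KK * (lam * ε * δ) := by
        rw [div_le_iff₀ (by positivity)] at hKY
        rw [hKKdef]; linarith [hKY]
      have hx : P * D * E ≤ 1 / KK := (le_div_iff₀ hKKpos).mpr (by linarith [hA])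
      have hy : 1 / KK ≤ lam * ε * δ / 2 := by
        rw [div_le_div_iff₀ hKKpos (by norm_num : (0:ℝ) < 2)]
        linarith [h6]
      linarith
    have hgoal : P * (D / δ * E * (1 / lam)) ≤ ε / 2 := by
      have hδne : δ ≠ 0 := hδ0.ne'
      have hlamne : lam ≠ 0 := hlam0.ne'
      rw [show P * (D / δ * E * (1 / lam)) = (P * D * E) / (δ * lam) by field_simp]
      rw [div_le_iff₀ (by positivity)]
      calc P * D * E ≤ lam * ε * δ / 2 := hkey
        _ ≤ ε / 2 * (δ * lam) := le_of_eq (by ring)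
    calc r ^ μ * (c1 * (1 / lam)) = P * (D / δ * E * (1 / lam)) := by
          rw [hc1, hDm, hPdef, hEdef]
      _ ≤ ε / 2 := hgoal
  calc r ^ μ * ∫ u in Ioo (0:ℝ) 1, f u
      ≤ r ^ μ * (c1 * (1 / lam) + 2 * (δ ^ μ / μ)) := mul_le_mul_of_nonneg_left hJ hrμ.le
    _ = r ^ μ * (c1 * (1 / lam)) + r ^ μ * (2 * (δ ^ μ / μ)) := by ring
    _ ≤ ε / 2 + ε / 2 := add_le_add hterm1 hterm2
    _ = ε := by ring


lemma st7_cont {p q : ℝ} (hp : -1 < p) (hq : -1 < q) (a : ℝ) (φ : ℝ → ℝ) (hφc : Continuous φ)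
    (M : ℝ) (hM : ∀ x, |φ x| ≤ M) (g : ℝ → ℝ) (hg : Continuous g) :
    Continuous fun τ : ℝ => ∫ u in Ioo (0:ℝ) 1, (1 - u) ^ p * u ^ q * φ (a + u * g τ) := by
  apply continuous_of_dominated (bound := fun u : ℝ => (1 - u) ^ p * u ^ q * M)
  · intro τ
    exact st7_meas _ (by fun_prop) measurableSet_Ioo (fun x h => h)
  · intro τ
    filter_upwards [ae_restrict_mem measurableSet_Ioo] with u hu
    have h1 : 0 ≤ (1 - u) ^ p := Real.rpow_nonneg (by linarith [hu.2]) _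
    have h2 : 0 ≤ u ^ q := Real.rpow_nonneg hu.1.le _
    rw [Real.norm_eq_abs, abs_mul, abs_of_nonneg (mul_nonneg h1 h2)]
    exact mul_le_mul_of_nonneg_left (hM _) (mul_nonneg h1 h2)
  · exact (st7_kint hp hq).mul_const M
  · filter_upwards [] with u
    fun_prop


/-- Clamp `t` into `[a,b]`. -/
noncomputable def st7Z (a b t : ℝ) : ℝ := max a (min t b)

lemma st7Z_cont (a b : ℝ) : Continuous (st7Z a b) := by
  unfold st7Z; fun_prop

lemma st7Z_mem {a b : ℝ} (h : a ≤ b) (t : ℝ) : st7Z a b t ∈ Icc a b :=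
  ⟨le_max_left _ _, max_le h (min_le_right _ _)⟩

lemma st7Z_eq {a b t : ℝ} (h : t ∈ Icc a b) : st7Z a b t = t := by
  unfold st7Z
  rw [min_eq_left h.2, max_eq_right h.1]

lemma st7Z_idem {a b : ℝ} (h : a ≤ b) (t : ℝ) : st7Z a b (st7Z a b t) = st7Z a b t :=
  st7Z_eq (st7Z_mem h t)

/-- The substituted fractional-integral operator value. -/
noncomputable def st7I (μ lam a b : ℝ) (ψ : ℝ → ℝ) (τ : ℝ) : ℝ :=
  ∫ u in Ioo (0:ℝ) 1,
    (1 - u) ^ (μ - 1) * u ^ (lam - 1) * ψ (st7Z a b (a + u * (st7Z a b τ - a)))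

/-- existence and uniqueness, in the weighted space, of the solution of
the Volterra integral equation (equivalently, of the weighted Cauchy problem for the
Hilfer fractional derivative) under a Lipschitz condition on `G`. -/
theorem statement7 (μ ν lam a b C L : ℝ) (hμ0 : 0 < μ) (hμ1 : μ < 1)
    (hν0 : 0 ≤ ν) (hν1 : ν ≤ 1) (hlam : lam = μ + ν - μ * ν) (hab : a < b) (hL : 0 < L)
    (G : ℝ → ℝ → ℝ)
    (hGmap : ∀ y : ℝ → ℝ, ExtendsCont (fun t => (t - a) ^ (1 - lam) * y t) a b →
      ExtendsCont (fun t => (t - a) ^ (1 - lam) * G t (y t)) a b)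
    (hGlip : ∀ t ∈ Set.Ioc a b, ∀ u v : ℝ, |G t u - G t v| ≤ L * |u - v|) :
    ∃ x : ℝ → ℝ,
      (ExtendsCont (fun t => (t - a) ^ (1 - lam) * x t) a b ∧
        ∀ t ∈ Set.Ioc a b,
          x t = C * (t - a) ^ (lam - 1) +
            (1 / Real.Gamma μ) * ∫ s in a..t, (t - s) ^ (μ - 1) * G s (x s)) ∧
      ∀ y : ℝ → ℝ,
        (ExtendsCont (fun t => (t - a) ^ (1 - lam) * y t) a b ∧
          ∀ t ∈ Set.Ioc a b,
            y t = C * (t - a) ^ (lam - 1) +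
              (1 / Real.Gamma μ) * ∫ s in a..t, (t - s) ^ (μ - 1) * G s (y s)) →
        ∀ t ∈ Set.Ioc a b, y t = x t := by
  simp only [ExtendsCont] at hGmap ⊢
  have hΓ : 0 < Real.Gamma μ := Real.Gamma_pos_of_pos hμ0
  have hlam0 : 0 < lam := by nlinarith
  have hlam1 : lam ≤ 1 := by nlinarith
  have hp : -1 < μ - 1 := by linarith
  have hq : -1 < lam - 1 := by linarith
  have hba : 0 < b - a := sub_pos.mpr hab
  obtain ⟨K, hK0, hKsm⟩ := st7_small (r0 := b - a) (ε := Real.Gamma μ / (2 * L))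
    hμ0 hμ1 hlam0 hlam1 hba (by positivity)
  set BCF := BoundedContinuousFunction ℝ ℝ with hBCF
  -- cancellation helper
  have hcancel : ∀ s : ℝ, a < s → ∀ X : ℝ, (s - a) ^ (lam - 1) * ((s - a) ^ (1 - lam) * X) = X := by
    intro s hs X
    have h0 : 0 < s - a := sub_pos.mpr hs
    rw [← mul_assoc, ← Real.rpow_add h0, show lam - 1 + (1 - lam) = 0 by ring,
      Real.rpow_zero, one_mul]
  have hcancel' : ∀ s : ℝ, a < s → ∀ X : ℝ, (s - a) ^ (1 - lam) * ((s - a) ^ (lam - 1) * X) = X := by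
    intro s hs X
    have h0 : 0 < s - a := sub_pos.mpr hs
    rw [← mul_assoc, ← Real.rpow_add h0, show 1 - lam + (lam - 1) = 0 by ring,
      Real.rpow_zero, one_mul]
  -- the weighted version of the candidate argument extends continuously
  have hext : ∀ g : BCF, ∃ w : ℝ → ℝ, ContinuousOn w (Set.Icc a b) ∧
      ∀ t ∈ Set.Ioc a b, w t = (t - a) ^ (1 - lam) *
        ((t - a) ^ (lam - 1) * (Real.exp (K * (t - a)) * g t)) := by
    intro g
    refine ⟨fun t => Real.exp (K * (t - a)) * g t, Continuous.continuousOn (by fun_prop), ?_⟩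
    intro t ht
    rw [hcancel' t ht.1]
  have hψex : ∀ g : BCF, ∃ ψ : ℝ → ℝ, ContinuousOn ψ (Set.Icc a b) ∧
      ∀ s ∈ Set.Ioc a b, ψ s = (s - a) ^ (1 - lam) *
        G s ((s - a) ^ (lam - 1) * (Real.exp (K * (s - a)) * g s)) :=
    fun g => hGmap _ (hext g)
  choose ψ hψc hψe using hψex
  -- bound for ψ
  have hMex : ∀ g : BCF, ∃ M : ℝ, ∀ x : ℝ, |ψ g (st7Z a b x)| ≤ M := by
    intro g
    obtain ⟨M, hM⟩ := isCompact_Icc.exists_bound_of_continuousOn (hψc g)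
    exact ⟨M, fun x => hM _ (st7Z_mem hab.le x)⟩
  choose M hM using hMex
  have hM0 : ∀ g : BCF, 0 ≤ M g := fun g => le_trans (abs_nonneg _) (hM g a)
  -- continuity of ψ g ∘ Z
  have hψZc : ∀ g : BCF, Continuous fun s => ψ g (st7Z a b s) := fun g =>
    (hψc g).comp_continuous (st7Z_cont a b) (st7Z_mem hab.le)
  -- I g
  set I : BCF → ℝ → ℝ := fun g => st7I μ lam a b (ψ g) with hI
  have hIdef : ∀ g τ, I g τ = ∫ u in Ioo (0:ℝ) 1,
      (1 - u) ^ (μ - 1) * u ^ (lam - 1) * ψ g (st7Z a b (a + u * (st7Z a b τ - a))) :=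
    fun g τ => rfl
  have hIcont : ∀ g : BCF, Continuous (I g) := by
    intro g
    have := st7_cont hp hq a (fun s => ψ g (st7Z a b s)) (hψZc g) (M g) (hM g)
      (fun τ => st7Z a b τ - a) (by have := st7Z_cont a b; fun_prop)
    exact this
  set Ck : ℝ := ∫ u in Ioo (0:ℝ) 1, (1 - u) ^ (μ - 1) * u ^ (lam - 1) with hCk
  have hCk0 : 0 ≤ Ck := by
    refine setIntegral_nonneg measurableSet_Ioo ?_
    intro u hu
    exact mul_nonneg (Real.rpow_nonneg (by linarith [hu.2]) _) (Real.rpow_nonneg hu.1.le _)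
  have hIint : ∀ (c : ℝ) (φ : ℝ → ℝ), Continuous φ → (∀ x ∈ Ioo (0:ℝ) 1, |φ x| ≤ c) →
      IntegrableOn (fun u => (1 - u) ^ (μ - 1) * u ^ (lam - 1) * φ u) (Ioo (0:ℝ) 1) volume := by
    intro c φ hφ hc
    refine Integrable.mono' ((st7_kint hp hq).mul_const c)
      (st7_meas _ hφ measurableSet_Ioo (fun x h => h)) ?_
    filter_upwards [ae_restrict_mem measurableSet_Ioo] with u hu
    have h1 : 0 ≤ (1 - u) ^ (μ - 1) := Real.rpow_nonneg (by linarith [hu.2]) _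
    have h2 : 0 ≤ u ^ (lam - 1) := Real.rpow_nonneg hu.1.le _
    rw [Real.norm_eq_abs, abs_mul, abs_of_nonneg (mul_nonneg h1 h2)]
    exact mul_le_mul_of_nonneg_left (hc _ hu) (mul_nonneg h1 h2)
  have hIbd : ∀ (g : BCF) (τ : ℝ), |I g τ| ≤ Ck * M g := by
    intro g τ
    rw [hIdef, ← Real.norm_eq_abs]
    have hb1 : Integrable (fun u : ℝ => (1 - u) ^ (μ - 1) * u ^ (lam - 1) * M g)
        (volume.restrict (Ioo (0:ℝ) 1)) := (st7_kint hp hq).mul_const (M g)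
    refine le_trans (norm_integral_le_of_norm_le hb1 ?_) (le_of_eq (integral_mul_const _ _))
    · filter_upwards [ae_restrict_mem measurableSet_Ioo] with u hu
      have h1 : 0 ≤ (1 - u) ^ (μ - 1) := Real.rpow_nonneg (by linarith [hu.2]) _
      have h2 : 0 ≤ u ^ (lam - 1) := Real.rpow_nonneg hu.1.le _
      rw [Real.norm_eq_abs, abs_mul, abs_of_nonneg (mul_nonneg h1 h2)]
      exact mul_le_mul_of_nonneg_left (hM g _) (mul_nonneg h1 h2)
  -- the operator
  have hTbody : ∀ g : BCF, Continuous (fun t : ℝ =>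
      Real.exp (-(K * (st7Z a b t - a))) *
        (C + (st7Z a b t - a) ^ μ / Real.Gamma μ * I g t)) := by
    intro g
    have h1 : Continuous fun t : ℝ => Real.exp (-(K * (st7Z a b t - a))) := by
      have := st7Z_cont a b; fun_prop
    have h2 : Continuous fun t : ℝ => (st7Z a b t - a) ^ μ := by
      have h3 : Continuous fun x : ℝ => x ^ μ := Real.continuous_rpow_const hμ0.le
      have h4 := st7Z_cont a b
      fun_prop
    exact h1.mul (continuous_const.add (((h2.div_const _).mul (hIcont g))))
  have hZsub0 : ∀ t : ℝ, 0 ≤ st7Z a b t - a := fun t => sub_nonneg.mpr (st7Z_mem hab.le t).1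
  have hZsubba : ∀ t : ℝ, st7Z a b t - a ≤ b - a := fun t =>
    sub_le_sub_right (st7Z_mem hab.le t).2 a
  have hexple : ∀ t : ℝ, Real.exp (-(K * (st7Z a b t - a))) ≤ 1 := by
    intro t
    apply Real.exp_le_one_iff.mpr
    have := mul_nonneg hK0 (hZsub0 t)
    linarith
  have hTbd : ∀ g : BCF, ∀ t : ℝ, ‖Real.exp (-(K * (st7Z a b t - a))) *
      (C + (st7Z a b t - a) ^ μ / Real.Gamma μ * I g t)‖ ≤
      |C| + (b - a) ^ μ / Real.Gamma μ * (Ck * M g) := by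
    intro g t
    rw [Real.norm_eq_abs, abs_mul, Real.abs_exp]
    have h1 : |C + (st7Z a b t - a) ^ μ / Real.Gamma μ * I g t| ≤
        |C| + (b - a) ^ μ / Real.Gamma μ * (Ck * M g) := by
      refine le_trans (abs_add_le _ _) ?_
      have h2 : |(st7Z a b t - a) ^ μ / Real.Gamma μ * I g t| ≤
          (b - a) ^ μ / Real.Gamma μ * (Ck * M g) := by
        rw [abs_mul, abs_div, abs_of_nonneg (Real.rpow_nonneg (hZsub0 t) μ),
          abs_of_pos hΓ]
        have h3 : (st7Z a b t - a) ^ μ ≤ (b - a) ^ μ :=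
          Real.rpow_le_rpow (hZsub0 t) (hZsubba t) hμ0.le
        apply mul_le_mul (by gcongr) (hIbd g t)
          (abs_nonneg _) (by positivity)
      linarith
    calc Real.exp (-(K * (st7Z a b t - a))) * |C + (st7Z a b t - a) ^ μ / Real.Gamma μ * I g t|
        ≤ 1 * (|C| + (b - a) ^ μ / Real.Gamma μ * (Ck * M g)) :=
          mul_le_mul (hexple t) h1 (abs_nonneg _) zero_le_one
      _ = _ := one_mul _
  set T : BCF → BCF := fun g => BoundedContinuousFunction.ofNormedAddCommGroup
    (fun t : ℝ => Real.exp (-(K * (st7Z a b t - a))) *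
      (C + (st7Z a b t - a) ^ μ / Real.Gamma μ * I g t))
    (hTbody g) _ (hTbd g) with hT
  have hTapp : ∀ (g : BCF) (t : ℝ), T g t =
      Real.exp (-(K * (st7Z a b t - a))) *
        (C + (st7Z a b t - a) ^ μ / Real.Gamma μ * I g t) := fun g t => rfl

  -- key representation of I on Ioc
  have hkeyrep : ∀ g : BCF, ∀ τ ∈ Set.Ioc a b,
      (τ - a) ^ (μ + lam - 1) * I g τ =
        ∫ s in a..τ, (τ - s) ^ (μ - 1) *
          G s ((s - a) ^ (lam - 1) * (Real.exp (K * (s - a)) * g s)) := by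
    intro g τ hτ
    have hτa : a < τ := hτ.1
    have hτb : τ ≤ b := hτ.2
    have hZτ : st7Z a b τ = τ := st7Z_eq ⟨hτa.le, hτb⟩
    have h1 : (∫ s in a..τ, (τ - s) ^ (μ - 1) *
        ((s - a) ^ (lam - 1) * ψ g (st7Z a b s))) =
        (τ - a) ^ (μ + lam - 1) * ∫ u in (0:ℝ)..1,
          (1 - u) ^ (μ - 1) * u ^ (lam - 1) * ψ g (st7Z a b (a + u * (τ - a))) :=
      st7_subst hτa (fun s => ψ g (st7Z a b s))
    have h2 : I g τ = ∫ u in (0:ℝ)..1,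
        (1 - u) ^ (μ - 1) * u ^ (lam - 1) * ψ g (st7Z a b (a + u * (τ - a))) := by
      rw [hIdef, hZτ, intervalIntegral.integral_of_le zero_le_one,
        integral_Ioc_eq_integral_Ioo]
    have h3 : (∫ s in a..τ, (τ - s) ^ (μ - 1) *
        ((s - a) ^ (lam - 1) * ψ g (st7Z a b s))) =
        ∫ s in a..τ, (τ - s) ^ (μ - 1) *
          G s ((s - a) ^ (lam - 1) * (Real.exp (K * (s - a)) * g s)) := by
      rw [intervalIntegral.integral_of_le hτa.le, intervalIntegral.integral_of_le hτa.le]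
      refine setIntegral_congr_fun measurableSet_Ioc ?_
      intro s hs
      have hsa : a < s := hs.1
      have hsb : s ≤ b := le_trans hs.2 hτb
      have hZs : st7Z a b s = s := st7Z_eq ⟨hsa.le, hsb⟩
      simp only [hZs, hψe g s ⟨hsa, hsb⟩, hcancel s hsa]
    rw [h2, ← h1, h3]
  -- contraction
  have hcontr : ∀ g h : BCF, dist (T g) (T h) ≤ (1/2 : ℝ) * dist g h := by
    intro g h
    rw [BoundedContinuousFunction.dist_le (by positivity)]
    intro t
    rw [hTapp g t, hTapp h t, Real.dist_eq]
    set τ := st7Z a b t with hτdef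
    have hτmem : τ ∈ Icc a b := st7Z_mem hab.le t
    rcases eq_or_lt_of_le hτmem.1 with hτa | hτa
    · have h0 : τ - a = 0 := by rw [← hτa]; ring
      rw [h0, Real.zero_rpow hμ0.ne']
      simp only [zero_div, zero_mul, add_zero, sub_self, abs_zero]
      exact mul_nonneg (by norm_num) dist_nonneg
    · have hτmem' : τ ∈ Set.Ioc a b := ⟨hτa, hτmem.2⟩
      have hra : 0 < τ - a := sub_pos.mpr hτa
      have hgd : ∀ u ∈ Ioo (0:ℝ) 1, a + u * (τ - a) ∈ Set.Ioc a b := by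
        intro u hu
        constructor
        · nlinarith [hu.1]
        · nlinarith [hu.2, hτmem.2]
      have hd0 : 0 ≤ dist g h := dist_nonneg
      have hψd : ∀ s ∈ Set.Ioc a b,
          |ψ g s - ψ h s| ≤ L * (Real.exp (K * (s - a)) * dist g h) := by
        intro s hs
        have hsa : 0 < s - a := sub_pos.mpr hs.1
        rw [hψe g s hs, hψe h s hs, ← mul_sub, abs_mul,
          abs_of_nonneg (Real.rpow_nonneg hsa.le _)]
        have hGl := hGlip s hs ((s - a) ^ (lam - 1) * (Real.exp (K * (s - a)) * g s))
          ((s - a) ^ (lam - 1) * (Real.exp (K * (s - a)) * h s))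
        have hargs : ((s - a) ^ (lam - 1) * (Real.exp (K * (s - a)) * g s)) -
            ((s - a) ^ (lam - 1) * (Real.exp (K * (s - a)) * h s)) =
            (s - a) ^ (lam - 1) * (Real.exp (K * (s - a)) * (g s - h s)) := by ring
        rw [hargs, abs_mul, abs_mul, abs_of_nonneg (Real.rpow_nonneg hsa.le _),
          abs_of_nonneg (Real.exp_pos _).le] at hGl
        have hgh : |g s - h s| ≤ dist g h := by
          have h9 := BoundedContinuousFunction.dist_coe_le_dist (f := g) (g := h) s
          rw [Real.dist_eq] at h9; exact h9
        have h1 : |G s ((s - a) ^ (lam - 1) * (Real.exp (K * (s - a)) * g s)) -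
            G s ((s - a) ^ (lam - 1) * (Real.exp (K * (s - a)) * h s))| ≤
            L * ((s - a) ^ (lam - 1) * (Real.exp (K * (s - a)) * dist g h)) := by
          refine hGl.trans (mul_le_mul_of_nonneg_left ?_ hL.le)
          exact mul_le_mul_of_nonneg_left
            (mul_le_mul_of_nonneg_left hgh (Real.exp_pos _).le)
            (Real.rpow_nonneg hsa.le _)
        calc (s - a) ^ (1 - lam) *
            |G s ((s - a) ^ (lam - 1) * (Real.exp (K * (s - a)) * g s)) -
              G s ((s - a) ^ (lam - 1) * (Real.exp (K * (s - a)) * h s))|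
            ≤ (s - a) ^ (1 - lam) *
              (L * ((s - a) ^ (lam - 1) * (Real.exp (K * (s - a)) * dist g h))) :=
              mul_le_mul_of_nonneg_left h1 (Real.rpow_nonneg hsa.le _)
          _ = L * ((s - a) ^ (1 - lam) *
              ((s - a) ^ (lam - 1) * (Real.exp (K * (s - a)) * dist g h))) := by ring
          _ = L * (Real.exp (K * (s - a)) * dist g h) := by rw [hcancel' s hs.1]
      -- integrability of the two integrands
      have hφc1 : ∀ g' : BCF, Continuous fun u : ℝ =>
          ψ g' (st7Z a b (a + u * (τ - a))) := by
        intro g'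
        have hcc := (hψZc g').comp (show Continuous fun u : ℝ => a + u * (τ - a) by fun_prop)
        exact hcc
      have hint1 : IntegrableOn (fun u : ℝ => (1 - u) ^ (μ - 1) * u ^ (lam - 1) *
          ψ g (st7Z a b (a + u * (τ - a)))) (Ioo (0:ℝ) 1) volume :=
        hIint (M g) _ (hφc1 g) (fun x _ => hM g _)
      have hint2 : IntegrableOn (fun u : ℝ => (1 - u) ^ (μ - 1) * u ^ (lam - 1) *
          ψ h (st7Z a b (a + u * (τ - a)))) (Ioo (0:ℝ) 1) volume :=
        hIint (M h) _ (hφc1 h) (fun x _ => hM h _)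
      have hbint : Integrable (fun u : ℝ => (1 - u) ^ (μ - 1) * u ^ (lam - 1) *
          (L * (Real.exp (K * (u * (τ - a))) * dist g h)))
          (volume.restrict (Ioo (0:ℝ) 1)) := by
        refine hIint (L * (Real.exp (K * (b - a)) * dist g h)) _ (by fun_prop) ?_
        intro u hu
        have he1 : Real.exp (K * (u * (τ - a))) ≤ Real.exp (K * (b - a)) := by
          apply Real.exp_le_exp.mpr
          have h7 : u * (τ - a) ≤ b - a := by nlinarith [hu.1, hu.2, hτmem.2]
          exact mul_le_mul_of_nonneg_left h7 hK0
        rw [abs_of_nonneg (by positivity)]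
        have := mul_le_mul_of_nonneg_right he1 hd0
        nlinarith [hL.le, this]
      have hIgh : |I g t - I h t| ≤ ∫ u in Ioo (0:ℝ) 1,
          (1 - u) ^ (μ - 1) * u ^ (lam - 1) *
            (L * (Real.exp (K * (u * (τ - a))) * dist g h)) := by
        rw [hIdef g t, hIdef h t, ← hτdef, ← integral_sub hint1 hint2, ← Real.norm_eq_abs]
        refine norm_integral_le_of_norm_le hbint ?_
        filter_upwards [ae_restrict_mem measurableSet_Ioo] with u hu
        have hsmem : a + u * (τ - a) ∈ Set.Ioc a b := hgd u hu
        have hZs : st7Z a b (a + u * (τ - a)) = a + u * (τ - a) :=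
          st7Z_eq ⟨hsmem.1.le, hsmem.2⟩
        have hkf1 : 0 ≤ (1 - u) ^ (μ - 1) := Real.rpow_nonneg (by linarith [hu.2]) _
        have hkf2 : 0 ≤ u ^ (lam - 1) := Real.rpow_nonneg hu.1.le _
        rw [← mul_sub, Real.norm_eq_abs, abs_mul, abs_of_nonneg (mul_nonneg hkf1 hkf2)]
        refine mul_le_mul_of_nonneg_left ?_ (mul_nonneg hkf1 hkf2)
        rw [hZs]
        have h8 := hψd (a + u * (τ - a)) hsmem
        rw [show a + u * (τ - a) - a = u * (τ - a) by ring] at h8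
        exact h8
      have hpush : Real.exp (-(K * (τ - a))) * (∫ u in Ioo (0:ℝ) 1,
          (1 - u) ^ (μ - 1) * u ^ (lam - 1) *
            (L * (Real.exp (K * (u * (τ - a))) * dist g h))) =
          (L * dist g h) * ∫ u in Ioo (0:ℝ) 1,
            (1 - u) ^ (μ - 1) * u ^ (lam - 1) * Real.exp (-(K * (τ - a) * (1 - u))) := by
        rw [← integral_const_mul, ← integral_const_mul]
        refine setIntegral_congr_fun measurableSet_Ioo ?_
        intro u _
        beta_reduce
        have he2 : Real.exp (-(K * (τ - a) * (1 - u))) =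
            Real.exp (K * (u * (τ - a))) * Real.exp (-(K * (τ - a))) := by
          rw [← Real.exp_add]; ring_nf
        rw [he2]; ring
      have hsmall := hKsm (τ - a) ⟨hra.le, sub_le_sub_right hτmem.2 a⟩
      have hexp0 : 0 < Real.exp (-(K * (τ - a))) := Real.exp_pos _
      have hrm0 : 0 ≤ (τ - a) ^ μ := Real.rpow_nonneg hra.le _
      have hE : Real.exp (-(K * (τ - a))) * (C + (τ - a) ^ μ / Real.Gamma μ * I g t) -
          Real.exp (-(K * (τ - a))) * (C + (τ - a) ^ μ / Real.Gamma μ * I h t) =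
          (Real.exp (-(K * (τ - a))) * ((τ - a) ^ μ / Real.Gamma μ)) *
            (I g t - I h t) := by ring
      rw [hE, abs_mul, abs_of_nonneg (by positivity :
        (0:ℝ) ≤ Real.exp (-(K * (τ - a))) * ((τ - a) ^ μ / Real.Gamma μ))]
      calc Real.exp (-(K * (τ - a))) * ((τ - a) ^ μ / Real.Gamma μ) * |I g t - I h t|
          ≤ Real.exp (-(K * (τ - a))) * ((τ - a) ^ μ / Real.Gamma μ) *
            (∫ u in Ioo (0:ℝ) 1, (1 - u) ^ (μ - 1) * u ^ (lam - 1) *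
              (L * (Real.exp (K * (u * (τ - a))) * dist g h))) :=
            mul_le_mul_of_nonneg_left hIgh (by positivity)
        _ = ((τ - a) ^ μ / Real.Gamma μ) * (Real.exp (-(K * (τ - a))) *
            (∫ u in Ioo (0:ℝ) 1, (1 - u) ^ (μ - 1) * u ^ (lam - 1) *
              (L * (Real.exp (K * (u * (τ - a))) * dist g h)))) := by ring
        _ = ((τ - a) ^ μ / Real.Gamma μ) * ((L * dist g h) *
            ∫ u in Ioo (0:ℝ) 1, (1 - u) ^ (μ - 1) * u ^ (lam - 1) *
              Real.exp (-(K * (τ - a) * (1 - u)))) := by rw [hpush]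
        _ = (L * dist g h / Real.Gamma μ) * ((τ - a) ^ μ *
            ∫ u in Ioo (0:ℝ) 1, (1 - u) ^ (μ - 1) * u ^ (lam - 1) *
              Real.exp (-(K * (τ - a) * (1 - u)))) := by ring
        _ ≤ (L * dist g h / Real.Gamma μ) * (Real.Gamma μ / (2 * L)) :=
            mul_le_mul_of_nonneg_left hsmall (by positivity)
        _ = 1 / 2 * dist g h := by field_simp
  -- the contraction fixed point
  have hhalf : ((1/2 : NNReal) : ℝ) = (1/2 : ℝ) := by norm_num
  have hTlip : LipschitzWith (1/2 : NNReal) T :=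
    LipschitzWith.of_dist_le_mul (fun x y => by rw [hhalf]; exact hcontr x y)
  have hTc : ContractingWith (1/2 : NNReal) T := ⟨by rw [← NNReal.coe_lt_coe]; norm_num, hTlip⟩
  set g0 : BCF := ContractingWith.fixedPoint T hTc with hg0
  have hfix : T g0 = g0 := hTc.fixedPoint_isFixedPt
  refine ⟨fun t => (t - a) ^ (lam - 1) * (Real.exp (K * (t - a)) * g0 t), ⟨?_, ?_⟩, ?_⟩
  · refine ⟨fun t => Real.exp (K * (t - a)) * g0 t,
      Continuous.continuousOn (by fun_prop), ?_⟩
    intro t ht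
    exact (hcancel' t ht.1 _).symm
  · intro t ht
    have hta : 0 < t - a := sub_pos.mpr ht.1
    have hZt : st7Z a b t = t := st7Z_eq ⟨ht.1.le, ht.2⟩
    have h5 : g0 t = Real.exp (-(K * (t - a))) *
        (C + (t - a) ^ μ / Real.Gamma μ * I g0 t) := by
      conv_lhs => rw [← hfix]
      rw [hTapp, hZt]
    have h6 : Real.exp (K * (t - a)) * g0 t =
        C + (t - a) ^ μ / Real.Gamma μ * I g0 t := by
      rw [h5, ← mul_assoc, ← Real.exp_add,
        show K * (t - a) + -(K * (t - a)) = 0 by ring, Real.exp_zero, one_mul]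
    have h7 := hkeyrep g0 t ht
    have h8 : (t - a) ^ (lam - 1) * (t - a) ^ μ = (t - a) ^ (μ + lam - 1) := by
      rw [← Real.rpow_add hta]; ring_nf
    calc (t - a) ^ (lam - 1) * (Real.exp (K * (t - a)) * g0 t)
        = (t - a) ^ (lam - 1) * (C + (t - a) ^ μ / Real.Gamma μ * I g0 t) := by rw [h6]
      _ = C * (t - a) ^ (lam - 1) +
          (1 / Real.Gamma μ) * ((t - a) ^ (lam - 1) * (t - a) ^ μ * I g0 t) := by ring
      _ = C * (t - a) ^ (lam - 1) +
          (1 / Real.Gamma μ) * ((t - a) ^ (μ + lam - 1) * I g0 t) := by rw [h8]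
      _ = C * (t - a) ^ (lam - 1) + (1 / Real.Gamma μ) *
          ∫ s in a..t, (t - s) ^ (μ - 1) *
            G s ((s - a) ^ (lam - 1) * (Real.exp (K * (s - a)) * g0 s)) := by rw [h7]
  · rintro y ⟨⟨w, hwc, hwe⟩, hyeq⟩
    obtain ⟨Mw, hMw⟩ := isCompact_Icc.exists_bound_of_continuousOn hwc
    have hMw0 : 0 ≤ Mw := le_trans (norm_nonneg _) (hMw a ⟨le_refl a, hab.le⟩)
    have hwZc : Continuous fun t : ℝ => w (st7Z a b t) :=
      hwc.comp_continuous (st7Z_cont a b) (st7Z_mem hab.le)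
    have hbody : Continuous fun t : ℝ =>
        Real.exp (-(K * (st7Z a b t - a))) * w (st7Z a b t) := by
      have h1 : Continuous fun t : ℝ => Real.exp (-(K * (st7Z a b t - a))) := by
        have := st7Z_cont a b; fun_prop
      exact h1.mul hwZc
    have hbbd : ∀ t : ℝ, ‖Real.exp (-(K * (st7Z a b t - a))) * w (st7Z a b t)‖ ≤ Mw := by
      intro t
      rw [Real.norm_eq_abs, abs_mul, Real.abs_exp]
      calc Real.exp (-(K * (st7Z a b t - a))) * |w (st7Z a b t)| ≤ 1 * Mw := by
            apply mul_le_mul (hexple t) ?_ (abs_nonneg _) zero_le_one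
            exact hMw _ (st7Z_mem hab.le t)
        _ = Mw := one_mul Mw
    set hb0 : BCF := BoundedContinuousFunction.ofNormedAddCommGroup
      (fun t : ℝ => Real.exp (-(K * (st7Z a b t - a))) * w (st7Z a b t))
      hbody Mw hbbd with hhb0
    have hbapp : ∀ t : ℝ, hb0 t =
        Real.exp (-(K * (st7Z a b t - a))) * w (st7Z a b t) := fun _ => rfl
    have hw_y : ∀ s ∈ Set.Ioc a b,
        (s - a) ^ (lam - 1) * (Real.exp (K * (s - a)) * hb0 s) = y s := by
      intro s hs
      have hZs : st7Z a b s = s := st7Z_eq ⟨hs.1.le, hs.2⟩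
      rw [hbapp, hZs, ← mul_assoc (Real.exp (K * (s - a))), ← Real.exp_add]
      rw [show K * (s - a) + -(K * (s - a)) = 0 by ring, Real.exp_zero, one_mul]
      rw [hwe s hs, hcancel s hs.1]
    have hfixb : T hb0 = hb0 := by
      have hclaim : ∀ τ ∈ Icc a b,
          C + (τ - a) ^ μ / Real.Gamma μ * I hb0 τ = w τ := by
        have hF : Continuous fun τ : ℝ =>
            C + (st7Z a b τ - a) ^ μ / Real.Gamma μ * I hb0 τ := by
          have h2 : Continuous fun t : ℝ => (st7Z a b t - a) ^ μ := by
            have h3 : Continuous fun x : ℝ => x ^ μ := Real.continuous_rpow_const hμ0.le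
            have h4 := st7Z_cont a b
            fun_prop
          exact continuous_const.add ((h2.div_const _).mul (hIcont hb0))
        have heqon : EqOn (fun τ : ℝ => C + (st7Z a b τ - a) ^ μ / Real.Gamma μ * I hb0 τ)
            (fun τ : ℝ => w (st7Z a b τ)) (Set.Ioc a b) := by
          intro τ hτ
          have hτa : a < τ := hτ.1
          have hta : 0 < τ - a := sub_pos.mpr hτa
          have hZτ : st7Z a b τ = τ := st7Z_eq ⟨hτa.le, hτ.2⟩
          show C + (st7Z a b τ - a) ^ μ / Real.Gamma μ * I hb0 τ = w (st7Z a b τ)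
          rw [hZτ]
          have h7 := hkeyrep hb0 τ hτ
          have h7' : (τ - a) ^ (μ + lam - 1) * I hb0 τ =
              ∫ s in a..τ, (τ - s) ^ (μ - 1) * G s (y s) := by
            rw [h7, intervalIntegral.integral_of_le hτa.le,
              intervalIntegral.integral_of_le hτa.le]
            refine setIntegral_congr_fun measurableSet_Ioc ?_
            intro s hs
            have hs' : s ∈ Set.Ioc a b := ⟨hs.1, le_trans hs.2 hτ.2⟩
            beta_reduce
            rw [hw_y s hs']
          have h9 := hyeq τ hτ
          rw [hwe τ hτ, h9]
          have e1 : (τ - a) ^ (1 - lam) * (τ - a) ^ (lam - 1) = 1 := by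
            rw [← Real.rpow_add hta, show 1 - lam + (lam - 1) = 0 by ring, Real.rpow_zero]
          have e2 : (τ - a) ^ (1 - lam) * (τ - a) ^ (μ + lam - 1) = (τ - a) ^ μ := by
            rw [← Real.rpow_add hta]; ring_nf
          calc C + (τ - a) ^ μ / Real.Gamma μ * I hb0 τ
              = C + (1 / Real.Gamma μ) * ((τ - a) ^ (1 - lam) *
                ((τ - a) ^ (μ + lam - 1) * I hb0 τ)) := by
                  linear_combination (-(I hb0 τ) / Real.Gamma μ) * e2
            _ = C + (1 / Real.Gamma μ) * ((τ - a) ^ (1 - lam) *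
                ∫ s in a..τ, (τ - s) ^ (μ - 1) * G s (y s)) := by rw [h7']
            _ = C * ((τ - a) ^ (1 - lam) * (τ - a) ^ (lam - 1)) +
                (τ - a) ^ (1 - lam) * ((1 / Real.Gamma μ) *
                  ∫ s in a..τ, (τ - s) ^ (μ - 1) * G s (y s)) := by rw [e1]; ring
            _ = (τ - a) ^ (1 - lam) * (C * (τ - a) ^ (lam - 1) +
                1 / Real.Gamma μ * ∫ s in a..τ, (τ - s) ^ (μ - 1) * G s (y s)) := by ring
        have hclos := heqon.closure hF hwZc
        intro τ hτ
        have h10 : τ ∈ closure (Set.Ioc a b) := by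
          rw [closure_Ioc hab.ne]; exact hτ
        have h11 := hclos h10
        have hZτ : st7Z a b τ = τ := st7Z_eq hτ
        simp only [hZτ] at h11
        exact h11
      ext t
      rw [hTapp, hbapp]
      have h11 := hclaim (st7Z a b t) (st7Z_mem hab.le t)
      have h12 : I hb0 (st7Z a b t) = I hb0 t := by
        rw [hIdef, hIdef, st7Z_idem hab.le]
      rw [h12] at h11
      rw [h11]
    have hbeq : hb0 = g0 := hTc.fixedPoint_unique hfixb
    intro t ht
    calc y t = (t - a) ^ (lam - 1) * (Real.exp (K * (t - a)) * hb0 t) := (hw_y t ht).symm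
      _ = (t - a) ^ (lam - 1) * (Real.exp (K * (t - a)) * g0 t) := by rw [hbeq]
end

section
/- Let 0 < μ < 1, 0 < λ ≤ 1, and let p satisfy 1−μ < p < λ. Then for all real t₀ < t: ∫_{t₀}^{t} (t−s)^{μ−1} (s−t₀)^{λ−1} ds ≤ ((1−p)/(λ−p))^{1−p} · (p/(p+μ−1))^{p} · (t−t₀)^{μ+λ−1}. -/
open MeasureTheory Set Filter Topology

/-- the Hölder-inequality estimate
`∫_{t₀}^{t} (t−s)^(μ−1)(s−t₀)^(λ−1) ds ≤ ((1−p)/(λ−p))^(1−p)·(p/(p+μ−1))^p·(t−t₀)^(μ+λ−1)`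
valid whenever `1−μ < p < λ ≤ 1`. -/
theorem statement10 (μ lam p t₀ t : ℝ) (hμ0 : 0 < μ) (hμ1 : μ < 1)
    (hlam0 : 0 < lam) (hlam1 : lam ≤ 1) (hp1 : 1 - μ < p) (hp2 : p < lam)
    (htt : t₀ < t) :
    (∫ s in t₀..t, (t - s) ^ (μ - 1) * (s - t₀) ^ (lam - 1)) ≤
      ((1 - p) / (lam - p)) ^ (1 - p) * (p / (p + μ - 1)) ^ p *
        (t - t₀) ^ (μ + lam - 1) := by
  have hp0 : 0 < p := by linarith
  have hp1' : p < 1 := lt_of_lt_of_le hp2 hlam1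
  have h1p : 0 < 1 - p := by linarith
  have hμp : 0 < p + μ - 1 := by linarith
  have hlp : 0 < lam - p := by linarith
  have hT0 : 0 < t - t₀ := by linarith
  set T := t - t₀ with hTdef
  set A : ℝ := (lam - 1) / (1 - p) with hA
  set B : ℝ := (μ - 1) / p with hB
  have hA1 : (-1 : ℝ) < A := by rw [hA, lt_div_iff₀ h1p]; linarith
  have hB1 : (-1 : ℝ) < B := by rw [hB, lt_div_iff₀ hp0]; linarith
  have hA1' : A + 1 = (lam - p) / (1 - p) := by
    rw [hA, div_add' _ _ _ (by linarith : (1:ℝ) - p ≠ 0)]; ring_nf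
  have hB1' : B + 1 = (p + μ - 1) / p := by
    rw [hB, div_add' _ _ _ (by linarith : p ≠ 0)]; ring_nf
  have hA1pos : 0 < A + 1 := by rw [hA1']; positivity
  have hB1pos : 0 < B + 1 := by rw [hB1']; positivity
  -- integrability of the power kernels on `Ioc t₀ t`
  have intg : ∀ r : ℝ, -1 < r →
      IntegrableOn (fun s => (s - t₀) ^ r) (Ioc t₀ t) := by
    intro r hr
    refine (intervalIntegrable_iff_integrableOn_Ioc_of_le htt.le).mp ?_
    have := (intervalIntegral.intervalIntegrable_rpow' hr (a := 0) (b := T)).comp_sub_right t₀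
    simpa [hTdef] using this
  have intf : ∀ r : ℝ, -1 < r →
      IntegrableOn (fun s => (t - s) ^ r) (Ioc t₀ t) := by
    intro r hr
    refine (intervalIntegrable_iff_integrableOn_Ioc_of_le htt.le).mp ?_
    have := ((intervalIntegral.intervalIntegrable_rpow' hr (a := 0) (b := T)).comp_sub_left t).symm
    simpa [hTdef] using this
  -- values of the integrals
  have valg : (∫ s in Ioc t₀ t, (s - t₀) ^ A) = T ^ (A + 1) / (A + 1) := by
    rw [← intervalIntegral.integral_of_le htt.le]
    rw [intervalIntegral.integral_comp_sub_right (fun x => x ^ A) t₀]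
    rw [integral_rpow (Or.inl hA1)]
    rw [sub_self, Real.zero_rpow (by linarith)]
    simp [hTdef]
  have valf : (∫ s in Ioc t₀ t, (t - s) ^ B) = T ^ (B + 1) / (B + 1) := by
    rw [← intervalIntegral.integral_of_le htt.le]
    rw [intervalIntegral.integral_comp_sub_left (fun x => x ^ B) t]
    rw [integral_rpow (Or.inl hB1)]
    rw [sub_self, Real.zero_rpow (by linarith)]
    simp [hTdef]
  set ν := volume.restrict (Ioc t₀ t) with hν
  have hconj : Real.HolderConjugate p⁻¹ (1 - p)⁻¹ := by
    rw [Real.holderConjugate_iff]; constructor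
    · exact (one_lt_inv₀ hp0).mpr hp1'
    · rw [inv_inv, inv_inv]; ring
  have hOne : ∀ q : ℝ, 0 < q → ENNReal.ofReal q ≠ 0 := fun q hq => by
    simp [ENNReal.ofReal_eq_zero, not_le, hq]
  -- Memℒp statements
  have memf : MemLp (fun s => (t - s) ^ (μ - 1)) (ENNReal.ofReal p⁻¹) ν := by
    have hmeas : AEStronglyMeasurable (fun s : ℝ => (t - s) ^ (μ - 1)) ν :=
      (by fun_prop : Measurable (fun s : ℝ => (t - s) ^ (μ - 1))).aestronglyMeasurable
    have h1 := hOne p⁻¹ (by positivity)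
    have h2 : ENNReal.ofReal p⁻¹ ≠ ⊤ := ENNReal.ofReal_ne_top
    have hiff := memLp_norm_rpow_iff (p := ENNReal.ofReal p⁻¹) (q := ENNReal.ofReal p⁻¹)
      hmeas h1 h2
    rw [ENNReal.div_self h1 h2] at hiff
    refine hiff.mp (memLp_one_iff_integrable.mpr ?_)
    refine (intf ((μ - 1) * p⁻¹) (by rw [← div_eq_mul_inv, ← hB]; exact hB1)).congr ?_
    filter_upwards [ae_restrict_mem measurableSet_Ioc] with x hx
    have hx2 : (0:ℝ) ≤ t - x := by linarith [hx.2]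
    rw [ENNReal.toReal_ofReal (by positivity : (0:ℝ) ≤ p⁻¹), Real.norm_eq_abs,
      abs_of_nonneg (Real.rpow_nonneg hx2 _), Real.rpow_mul hx2]
  have memg : MemLp (fun s => (s - t₀) ^ (lam - 1)) (ENNReal.ofReal (1 - p)⁻¹) ν := by
    have hmeas : AEStronglyMeasurable (fun s : ℝ => (s - t₀) ^ (lam - 1)) ν :=
      (by fun_prop : Measurable (fun s : ℝ => (s - t₀) ^ (lam - 1))).aestronglyMeasurable
    have h1 := hOne (1 - p)⁻¹ (by positivity)
    have h2 : ENNReal.ofReal (1 - p)⁻¹ ≠ ⊤ := ENNReal.ofReal_ne_top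
    have hiff := memLp_norm_rpow_iff (p := ENNReal.ofReal (1 - p)⁻¹)
      (q := ENNReal.ofReal (1 - p)⁻¹) hmeas h1 h2
    rw [ENNReal.div_self h1 h2] at hiff
    refine hiff.mp (memLp_one_iff_integrable.mpr ?_)
    refine (intg ((lam - 1) * (1 - p)⁻¹)
      (by rw [← div_eq_mul_inv, ← hA]; exact hA1)).congr ?_
    filter_upwards [ae_restrict_mem measurableSet_Ioc] with x hx
    have hx2 : (0:ℝ) ≤ x - t₀ := by linarith [hx.1]
    rw [ENNReal.toReal_ofReal (by positivity : (0:ℝ) ≤ (1 - p)⁻¹), Real.norm_eq_abs,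
      abs_of_nonneg (Real.rpow_nonneg hx2 _), Real.rpow_mul hx2]
  -- nonnegativity
  have hf0 : 0 ≤ᵐ[ν] fun s : ℝ => (t - s) ^ (μ - 1) := by
    filter_upwards [ae_restrict_mem measurableSet_Ioc] with x hx
    exact Real.rpow_nonneg (by linarith [hx.2]) _
  have hg0 : 0 ≤ᵐ[ν] fun s : ℝ => (s - t₀) ^ (lam - 1) := by
    filter_upwards [ae_restrict_mem measurableSet_Ioc] with x hx
    exact Real.rpow_nonneg (by linarith [hx.1]) _
  -- Hölder
  have hold := MeasureTheory.integral_mul_le_Lp_mul_Lq_of_nonneg hconj hf0 hg0 memf memg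
  -- rewrite the two inner integrals
  have e1 : (∫ s, ((t - s) ^ (μ - 1)) ^ p⁻¹ ∂ν) = T ^ (B + 1) / (B + 1) := by
    rw [← valf]
    refine setIntegral_congr_fun measurableSet_Ioc fun x hx => ?_
    have hx2 : (0:ℝ) ≤ t - x := by linarith [hx.2]
    rw [← Real.rpow_mul hx2, ← div_eq_mul_inv, ← hB]
  have e2 : (∫ s, ((s - t₀) ^ (lam - 1)) ^ (1 - p)⁻¹ ∂ν) = T ^ (A + 1) / (A + 1) := by
    rw [← valg]
    refine setIntegral_congr_fun measurableSet_Ioc fun x hx => ?_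
    have hx2 : (0:ℝ) ≤ x - t₀ := by linarith [hx.1]
    rw [← Real.rpow_mul hx2, ← div_eq_mul_inv, ← hA]
  rw [e1, e2, one_div, one_div, inv_inv, inv_inv] at hold
  rw [intervalIntegral.integral_of_le htt.le]
  refine le_trans hold (le_of_eq ?_)
  -- now pure computation
  have h1 : T ^ (B + 1) / (B + 1) = p / (p + μ - 1) * T ^ (B + 1) := by
    rw [hB1']; field_simp
  have h2 : T ^ (A + 1) / (A + 1) = (1 - p) / (lam - p) * T ^ (A + 1) := by
    rw [hA1']; field_simp
  rw [h1, h2,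
    Real.mul_rpow (by positivity) (Real.rpow_nonneg hT0.le _),
    Real.mul_rpow (by positivity) (Real.rpow_nonneg hT0.le _),
    ← Real.rpow_mul hT0.le, ← Real.rpow_mul hT0.le]
  have hBp : (B + 1) * p = p + μ - 1 := by rw [hB1']; field_simp
  have hAp : (A + 1) * (1 - p) = lam - p := by rw [hA1']; field_simp
  rw [hBp, hAp, show μ + lam - 1 = p + μ - 1 + (lam - p) by ring, Real.rpow_add hT0]
  ring
end

section
/- Let 0 < μ < 1, 0 ≤ ν ≤ 1, λ = μ + ν − μν, and let p satisfy 1−μ < p < λ. Let t₀ < p₀, L > 0, and let g : [t₀,p₀] × ℝⁿ → ℝⁿ satisfy ‖g(t,u) − g(t,v)‖ ≤ L‖u−v‖ for all t ∈ [t₀,p₀] and u, v ∈ ℝⁿ. Let x₁, x₂ : (t₀,p₀] → ℝⁿ be such that s ↦ (s−t₀)^{1−λ} xᵢ(s) extend continuously to [t₀,p₀] and s ↦ (s−t₀)^{1−λ} g(s, xᵢ(s)) are continuous for i = 1, 2. Then for every t ∈ (t₀,p₀]: (t−t₀)^{1−λ} · (1/Γ(μ)) · ‖∫_{t₀}^{t}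 (t−s)^{μ−1} (g(s,x₁(s)) − g(s,x₂(s))) ds‖ ≤ (L (t−t₀)^{μ}/Γ(μ)) · ((1−p)/(λ−p))^{1−p} · (p/(p+μ−1))^{p} · sup_{s∈(t₀,p₀]} ‖(s−t₀)^{1−λ} (x₁(s) − x₂(s))‖. -/
open MeasureTheory Set Filter Topology

lemma auxIntLeft {a b r : ℝ} (hr : -1 < r) :
    MeasureTheory.IntegrableOn (fun s => (s - a) ^ r) (Set.Ioc a b) := by
  rcases le_or_gt a b with hab | hab
  · have h := (intervalIntegral.intervalIntegrable_rpow' (a := 0) (b := b - a) hr).comp_sub_right a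
    rw [zero_add, sub_add_cancel] at h
    exact (intervalIntegrable_iff_integrableOn_Ioc_of_le hab).mp h
  · rw [Set.Ioc_eq_empty (not_lt.mpr hab.le)]
    exact integrableOn_empty

lemma auxIntRight {a b r : ℝ} (hr : -1 < r) :
    MeasureTheory.IntegrableOn (fun s => (b - s) ^ r) (Set.Ioc a b) := by
  rcases le_or_gt a b with hab | hab
  · have h := (intervalIntegral.intervalIntegrable_rpow' (a := 0) (b := b - a) hr).comp_sub_left b
    rw [sub_zero, sub_sub_cancel] at h
    exact (intervalIntegrable_iff_integrableOn_Ioc_of_le hab).mp h.symm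
  · rw [Set.Ioc_eq_empty (not_lt.mpr hab.le)]
    exact integrableOn_empty

lemma auxValLeft {a b r : ℝ} (hr : -1 < r) (hab : a ≤ b) :
    ∫ s in Set.Ioc a b, (s - a) ^ r = (b - a) ^ (r + 1) * (r + 1)⁻¹ := by
  rw [← intervalIntegral.integral_of_le hab,
    show (fun s => (s - a) ^ r) = fun s => (fun u : ℝ => u ^ r) (s - a) from rfl,
    intervalIntegral.integral_comp_sub_right (fun u : ℝ => u ^ r) a, sub_self,
    integral_rpow (Or.inl hr),
    Real.zero_rpow (by linarith), sub_zero, div_eq_mul_inv]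

lemma auxValRight {a b r : ℝ} (hr : -1 < r) (hab : a ≤ b) :
    ∫ s in Set.Ioc a b, (b - s) ^ r = (b - a) ^ (r + 1) * (r + 1)⁻¹ := by
  rw [← intervalIntegral.integral_of_le hab,
    show (fun s => (b - s) ^ r) = fun s => (fun u : ℝ => u ^ r) (b - s) from rfl,
    intervalIntegral.integral_comp_sub_left (fun u : ℝ => u ^ r) b, sub_self,
    integral_rpow (Or.inl hr),
    Real.zero_rpow (by linarith), sub_zero, div_eq_mul_inv]

/-- `f` defined on `(a,b]` extends continuously to `[a,b]`. -/
def ExtendsContV {n : ℕ} (f : ℝ → EuclideanSpace ℝ (Fin n)) (a b : ℝ) : Prop :=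
  ∃ g : ℝ → EuclideanSpace ℝ (Fin n),
    ContinuousOn g (Set.Icc a b) ∧ ∀ t ∈ Set.Ioc a b, g t = f t

/-- weighted Hölder estimate for the difference of the
Riemann–Liouville fractional integral terms built from a Lipschitz nonlinearity. -/
theorem statement11 (n : ℕ) (μ ν lam p L t₀ p₀ : ℝ)
    (hμ0 : 0 < μ) (hμ1 : μ < 1) (hν0 : 0 ≤ ν) (hν1 : ν ≤ 1)
    (hlam : lam = μ + ν - μ * ν) (hp1 : 1 - μ < p) (hp2 : p < lam)
    (ht : t₀ < p₀) (hL : 0 < L)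
    (g : ℝ → EuclideanSpace ℝ (Fin n) → EuclideanSpace ℝ (Fin n))
    (hg : ∀ t ∈ Set.Icc t₀ p₀, ∀ u v : EuclideanSpace ℝ (Fin n),
      ‖g t u - g t v‖ ≤ L * ‖u - v‖)
    (x₁ x₂ : ℝ → EuclideanSpace ℝ (Fin n))
    (hx₁ : ExtendsContV (fun s => (s - t₀) ^ (1 - lam) • x₁ s) t₀ p₀)
    (hx₂ : ExtendsContV (fun s => (s - t₀) ^ (1 - lam) • x₂ s) t₀ p₀)
    (hgx₁ : ContinuousOn (fun s => (s - t₀) ^ (1 - lam) • g s (x₁ s)) (Set.Ioc t₀ p₀))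
    (hgx₂ : ContinuousOn (fun s => (s - t₀) ^ (1 - lam) • g s (x₂ s)) (Set.Ioc t₀ p₀)) :
    ∀ t ∈ Set.Ioc t₀ p₀,
      (t - t₀) ^ (1 - lam) * ((1 / Real.Gamma μ) *
          ‖∫ s in t₀..t, (t - s) ^ (μ - 1) • (g s (x₁ s) - g s (x₂ s))‖) ≤
        (L * (t - t₀) ^ μ / Real.Gamma μ) * ((1 - p) / (lam - p)) ^ (1 - p) *
          (p / (p + μ - 1)) ^ p *
          sSup ((fun s => ‖(s - t₀) ^ (1 - lam) • (x₁ s - x₂ s)‖) '' Set.Ioc t₀ p₀) := by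
  obtain ⟨G₁, hG₁c, hG₁⟩ := hx₁
  obtain ⟨G₂, hG₂c, hG₂⟩ := hx₂
  intro t htt
  obtain ⟨ht0, htp⟩ := htt
  have hT : (0:ℝ) < t - t₀ := sub_pos.2 ht0
  have hmulam : μ ≤ lam := by nlinarith
  have hlam1 : lam ≤ 1 := by nlinarith
  have hp0 : 0 < p := by linarith
  have hp_lt1 : p < 1 := lt_of_lt_of_le hp2 hlam1
  have h1p : (0:ℝ) < 1 - p := by linarith
  have hlamp : 0 < lam - p := by linarith
  have hpμ : 0 < p + μ - 1 := by linarith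
  have hΓ : 0 < Real.Gamma μ := Real.Gamma_pos_of_pos hμ0
  set M := sSup ((fun s => ‖(s - t₀) ^ (1 - lam) • (x₁ s - x₂ s)‖) '' Set.Ioc t₀ p₀) with hM
  have himg : ∀ s ∈ Set.Ioc t₀ p₀, (s - t₀) ^ (1 - lam) • (x₁ s - x₂ s) = G₁ s - G₂ s := by
    intro s hs; simp only [smul_sub, hG₁ s hs, hG₂ s hs]
  have hbdd : BddAbove ((fun s => ‖(s - t₀) ^ (1 - lam) • (x₁ s - x₂ s)‖) '' Set.Ioc t₀ p₀) := by
    have hcomp : IsCompact ((fun s => ‖G₁ s - G₂ s‖) '' Set.Icc t₀ p₀) :=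
      isCompact_Icc.image_of_continuousOn ((hG₁c.sub hG₂c).norm)
    apply hcomp.bddAbove.mono
    rintro - ⟨s, hs, rfl⟩
    exact ⟨s, Set.Ioc_subset_Icc_self hs, by simp [himg s hs]⟩
  have hMle : ∀ s ∈ Set.Ioc t₀ p₀, ‖(s - t₀) ^ (1 - lam) • (x₁ s - x₂ s)‖ ≤ M :=
    fun s hs => le_csSup hbdd ⟨s, hs, rfl⟩
  have hM0 : 0 ≤ M := le_trans (norm_nonneg _) (hMle p₀ ⟨ht, le_refl _⟩)
  set ρ := volume.restrict (Set.Ioc t₀ t) with hρ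
  have hres : ρ = volume.restrict (Set.Ioo t₀ t) :=
    (Measure.restrict_congr_set Ioo_ae_eq_Ioc).symm
  -- conjugate exponents
  have hPQ : Real.HolderConjugate (1/(1-p)) (1/p) := by
    rw [Real.holderConjugate_iff]
    constructor
    · rw [lt_div_iff₀ h1p]; linarith
    · rw [one_div, inv_inv, one_div, inv_inv]; ring
  -- exponents of the two rpow integrals
  have hr₁ : (-1:ℝ) < (lam - 1) * (1/(1-p)) := by
    rw [mul_one_div, lt_div_iff₀ h1p]; linarith
  have hr₂ : (-1:ℝ) < (μ - 1) * (1/p) := by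
    rw [mul_one_div, lt_div_iff₀ hp0]; linarith
  -- measurability of the weight functions
  have hmeas₁ : AEStronglyMeasurable (fun s : ℝ => (s - t₀) ^ (lam - 1)) ρ := by
    rw [hres]
    exact (((continuousOn_id.sub continuousOn_const).rpow_const
      (fun x hx => Or.inl (sub_pos.2 hx.1).ne')).aestronglyMeasurable measurableSet_Ioo)
  have hmeas₂ : AEStronglyMeasurable (fun s : ℝ => (t - s) ^ (μ - 1)) ρ := by
    rw [hres]
    exact (((continuousOn_const.sub continuousOn_id).rpow_const
      (fun x hx => Or.inl (sub_pos.2 hx.2).ne')).aestronglyMeasurable measurableSet_Ioo)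
  -- Memℒp facts
  have hP0 : ENNReal.ofReal (1/(1-p)) ≠ 0 := by
    simp only [ne_eq, ENNReal.ofReal_eq_zero, not_le]; positivity
  have hQ0 : ENNReal.ofReal (1/p) ≠ 0 := by
    simp only [ne_eq, ENNReal.ofReal_eq_zero, not_le]; positivity
  have memf₁ : MemLp (fun s : ℝ => (s - t₀) ^ (lam - 1)) (ENNReal.ofReal (1/(1-p))) ρ := by
    rw [← memLp_norm_rpow_iff hmeas₁ hP0 ENNReal.ofReal_ne_top,
      ENNReal.toReal_ofReal (by positivity), ENNReal.div_self hP0 ENNReal.ofReal_ne_top,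
      memLp_one_iff_integrable]
    apply MeasureTheory.Integrable.congr (auxIntLeft (b := t) hr₁)
    filter_upwards [ae_restrict_mem measurableSet_Ioc] with s hs
    have h0 : (0:ℝ) ≤ s - t₀ := le_of_lt (sub_pos.2 hs.1)
    rw [Real.rpow_mul h0, Real.norm_eq_abs, abs_of_nonneg (Real.rpow_nonneg h0 _)]
  have memf₂ : MemLp (fun s : ℝ => (t - s) ^ (μ - 1)) (ENNReal.ofReal (1/p)) ρ := by
    rw [← memLp_norm_rpow_iff hmeas₂ hQ0 ENNReal.ofReal_ne_top,
      ENNReal.toReal_ofReal (by positivity), ENNReal.div_self hQ0 ENNReal.ofReal_ne_top,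
      memLp_one_iff_integrable]
    apply MeasureTheory.Integrable.congr (auxIntRight (a := t₀) hr₂)
    filter_upwards [ae_restrict_mem measurableSet_Ioc] with s hs
    have h0 : (0:ℝ) ≤ t - s := sub_nonneg.2 hs.2
    rw [Real.rpow_mul h0, Real.norm_eq_abs, abs_of_nonneg (Real.rpow_nonneg h0 _)]
  have hnn₁ : 0 ≤ᵐ[ρ] fun s : ℝ => (s - t₀) ^ (lam - 1) := by
    filter_upwards [ae_restrict_mem measurableSet_Ioc] with s hs
    exact Real.rpow_nonneg (le_of_lt (sub_pos.2 hs.1)) _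
  have hnn₂ : 0 ≤ᵐ[ρ] fun s : ℝ => (t - s) ^ (μ - 1) := by
    filter_upwards [ae_restrict_mem measurableSet_Ioc] with s hs
    exact Real.rpow_nonneg (sub_nonneg.2 hs.2) _
  -- Hölder
  have holder := MeasureTheory.integral_mul_le_Lp_mul_Lq_of_nonneg hPQ hnn₁ hnn₂ memf₁ memf₂
  rw [one_div_one_div, one_div_one_div] at holder
  -- compute the two integrals
  have hA : (∫ a, ((a - t₀) ^ (lam - 1)) ^ (1/(1-p)) ∂ρ)
      = (t - t₀) ^ ((lam - p)/(1-p)) * ((1 - p)/(lam - p)) := by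
    rw [hρ, MeasureTheory.setIntegral_congr_fun measurableSet_Ioc
      (fun s hs => (Real.rpow_mul (le_of_lt (sub_pos.2 hs.1)) _ _).symm),
      auxValLeft hr₁ ht0.le,
      show (lam - 1) * (1/(1-p)) + 1 = (lam - p)/(1-p) by field_simp; ring,
      inv_div]
  have hB : (∫ a, ((t - a) ^ (μ - 1)) ^ (1/p) ∂ρ)
      = (t - t₀) ^ ((p + μ - 1)/p) * (p/(p + μ - 1)) := by
    rw [hρ, MeasureTheory.setIntegral_congr_fun measurableSet_Ioc
      (fun s hs => (Real.rpow_mul (sub_nonneg.2 hs.2) _ _).symm),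
      auxValRight hr₂ ht0.le,
      show (μ - 1) * (1/p) + 1 = (p + μ - 1)/p by field_simp; ring,
      inv_div]
  have hA' : ((t - t₀) ^ ((lam - p)/(1-p)) * ((1 - p)/(lam - p))) ^ (1 - p)
      = (t - t₀) ^ (lam - p) * ((1 - p)/(lam - p)) ^ (1 - p) := by
    rw [Real.mul_rpow (Real.rpow_nonneg hT.le _) (by positivity),
      ← Real.rpow_mul hT.le, div_mul_cancel₀ _ (ne_of_gt h1p)]
  have hB' : ((t - t₀) ^ ((p + μ - 1)/p) * (p/(p + μ - 1))) ^ p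
      = (t - t₀) ^ (p + μ - 1) * (p/(p + μ - 1)) ^ p := by
    rw [Real.mul_rpow (Real.rpow_nonneg hT.le _) (by positivity),
      ← Real.rpow_mul hT.le, div_mul_cancel₀ _ (ne_of_gt hp0)]
  rw [hA, hB, hA', hB'] at holder
  -- integrability of the product, for the norm bound
  have hprod : Integrable (fun s : ℝ => (s - t₀) ^ (lam - 1) * (t - s) ^ (μ - 1)) ρ := by
    have e1 : (1:ENNReal) = 1 / ENNReal.ofReal (1/(1-p)) + 1 / ENNReal.ofReal (1/p) := by
      rw [one_div (ENNReal.ofReal (1/(1-p))), one_div (ENNReal.ofReal (1/p)),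
        ← ENNReal.ofReal_inv_of_pos (by positivity), ← ENNReal.ofReal_inv_of_pos (by positivity),
        one_div, inv_inv, one_div, inv_inv, ← ENNReal.ofReal_add (by linarith) hp0.le,
        show 1 - p + p = 1 by ring, ENNReal.ofReal_one]
    have := (memf₂.smul memf₁ (r := 1) (hpqr := ⟨by rw [inv_one]; simpa only [one_div] using e1.symm⟩)).integrable le_rfl
    exact this.congr (Eventually.of_forall fun s => by simp [smul_eq_mul])
  -- the pointwise bound and the norm estimate
  have hnorm : ‖∫ s in t₀..t, (t - s) ^ (μ - 1) • (g s (x₁ s) - g s (x₂ s))‖ ≤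
      ∫ s, L * M * ((s - t₀) ^ (lam - 1) * (t - s) ^ (μ - 1)) ∂ρ := by
    rw [intervalIntegral.integral_of_le ht0.le]
    apply MeasureTheory.norm_integral_le_of_norm_le (hprod.const_mul (L * M))
    filter_upwards [ae_restrict_mem measurableSet_Ioc] with s hs
    have hs0 : (0:ℝ) < s - t₀ := sub_pos.2 hs.1
    have hts : (0:ℝ) ≤ t - s := sub_nonneg.2 hs.2
    have hsmem : s ∈ Set.Ioc t₀ p₀ := ⟨hs.1, hs.2.trans htp⟩
    rw [norm_smul, Real.norm_eq_abs, abs_of_nonneg (Real.rpow_nonneg hts _)]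
    have hgl : ‖g s (x₁ s) - g s (x₂ s)‖ ≤ L * ‖x₁ s - x₂ s‖ :=
      hg s ⟨hs.1.le, hs.2.trans htp⟩ _ _
    have hxx : ‖x₁ s - x₂ s‖ = (s - t₀) ^ (lam - 1) * ‖(s - t₀) ^ (1 - lam) • (x₁ s - x₂ s)‖ := by
      rw [norm_smul, Real.norm_eq_abs, abs_of_nonneg (Real.rpow_nonneg hs0.le _), ← mul_assoc,
        ← Real.rpow_add hs0, show lam - 1 + (1 - lam) = 0 by ring, Real.rpow_zero, one_mul]
    have hxb : ‖x₁ s - x₂ s‖ ≤ (s - t₀) ^ (lam - 1) * M := by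
      rw [hxx]
      exact mul_le_mul_of_nonneg_left (hMle s hsmem) (Real.rpow_nonneg hs0.le _)
    calc (t - s) ^ (μ - 1) * ‖g s (x₁ s) - g s (x₂ s)‖
        ≤ (t - s) ^ (μ - 1) * (L * ((s - t₀) ^ (lam - 1) * M)) := by
          apply mul_le_mul_of_nonneg_left _ (Real.rpow_nonneg hts _)
          exact hgl.trans (mul_le_mul_of_nonneg_left hxb hL.le)
      _ = L * M * ((s - t₀) ^ (lam - 1) * (t - s) ^ (μ - 1)) := by ring
  rw [MeasureTheory.integral_const_mul] at hnorm
  have key : ‖∫ s in t₀..t, (t - s) ^ (μ - 1) • (g s (x₁ s) - g s (x₂ s))‖ ≤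
      L * M * ((t - t₀) ^ (lam - p) * ((1 - p)/(lam - p)) ^ (1 - p) *
        ((t - t₀) ^ (p + μ - 1) * (p/(p + μ - 1)) ^ p)) := by
    refine hnorm.trans ?_
    apply mul_le_mul_of_nonneg_left _ (by positivity)
    exact holder
  have hTpow : (t - t₀) ^ (1 - lam) * ((t - t₀) ^ (lam - p) * (t - t₀) ^ (p + μ - 1))
      = (t - t₀) ^ μ := by
    rw [← Real.rpow_add hT, ← Real.rpow_add hT]
    congr 1; ring
  calc (t - t₀) ^ (1 - lam) * ((1 / Real.Gamma μ) *
        ‖∫ s in t₀..t, (t - s) ^ (μ - 1) • (g s (x₁ s) - g s (x₂ s))‖)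
      ≤ (t - t₀) ^ (1 - lam) * ((1 / Real.Gamma μ) *
        (L * M * ((t - t₀) ^ (lam - p) * ((1 - p)/(lam - p)) ^ (1 - p) *
          ((t - t₀) ^ (p + μ - 1) * (p/(p + μ - 1)) ^ p)))) := by
        apply mul_le_mul_of_nonneg_left _ (Real.rpow_nonneg hT.le _)
        exact mul_le_mul_of_nonneg_left key (by positivity)
    _ = (L * (t - t₀) ^ μ / Real.Gamma μ) * ((1 - p) / (lam - p)) ^ (1 - p) *
          (p / (p + μ - 1)) ^ p * M := by
        rw [← hTpow]; field_simp
end
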